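/- arXiv:1709.08051 — 2 statements merged into one kernel-verified Lean document; each statement's English description precedes it below -/
import Mathlib

section
/- Let A be a regular multiplier Hopf algebra, R a unitary left A-module algebra via ▷, and L ⊆ R a right ideal of R possessing an identity element 1_L. Then (L, ·, 𝔢) is a partial A-module algebra, where a·x = 1_L(a▷x) for a ∈ A, x ∈ L, and 𝔢(a) = a·1_L. Moreover, if L is a two-sided ideal of R, this induced partial action is symmetric. -/
/- ## Preliminaries: multiplier algebras and (regular) multiplier Hopf algebras -/

open scoped TensorProduct
open TensorProduct LinearMap
set_option linter.unusedSectionVars false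

noncomputable section

variable (k : Type*) [Field k]

section MultiplierAlgebra

variable (A : Type*) [NonUnitalRing A] [Module k A] [SMulCommClass k A A] [IsScalarTower k A A]

/-- The product of an algebra is *nondegenerate*. -/
def NondegProd : Prop :=
  (∀ a : A, (∀ b : A, a * b = 0) → a = 0) ∧ ∀ b : A, (∀ a : A, a * b = 0) → b = 0

/-- A multiplier of `A`: a pair `(U, V)` of linear maps with `U (a*b) = U a * b`,
`V (a*b) = a * V b` and `V a * b = a * U b`. -/
@[ext] structure Multiplier where
  U : A →ₗ[k] A
  V : A →ₗ[k] A
  U_mul : ∀ a b : A, U (a * b) = U a * b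
  V_mul : ∀ a b : A, V (a * b) = a * V b
  compat : ∀ a b : A, V a * b = a * U b

namespace Multiplier

variable {k A}

instance : Zero (Multiplier k A) := ⟨⟨0, 0, by simp, by simp, by simp⟩⟩
instance : Add (Multiplier k A) :=
  ⟨fun m n => ⟨m.U + n.U, m.V + n.V,
    by simp [m.U_mul, n.U_mul, add_mul],
    by simp [m.V_mul, n.V_mul, mul_add],
    by simp [add_mul, mul_add, m.compat, n.compat]⟩⟩
instance : Neg (Multiplier k A) :=
  ⟨fun m => ⟨-m.U, -m.V, by simp [m.U_mul], by simp [m.V_mul],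
    by simp [m.compat]⟩⟩
instance : SMul k (Multiplier k A) :=
  ⟨fun c m => ⟨c • m.U, c • m.V,
    by simp [m.U_mul, smul_mul_assoc],
    by simp [m.V_mul, mul_smul_comm],
    by simp [smul_mul_assoc, mul_smul_comm, m.compat]⟩⟩

@[simp] lemma zero_U : (0 : Multiplier k A).U = 0 := rfl
@[simp] lemma zero_V : (0 : Multiplier k A).V = 0 := rfl
@[simp] lemma add_U (m n : Multiplier k A) : (m + n).U = m.U + n.U := rfl
@[simp] lemma add_V (m n : Multiplier k A) : (m + n).V = m.V + n.V := rfl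
@[simp] lemma neg_U (m : Multiplier k A) : (-m).U = -m.U := rfl
@[simp] lemma neg_V (m : Multiplier k A) : (-m).V = -m.V := rfl
@[simp] lemma smul_U (c : k) (m : Multiplier k A) : (c • m).U = c • m.U := rfl
@[simp] lemma smul_V (c : k) (m : Multiplier k A) : (c • m).V = c • m.V := rfl

instance : AddCommGroup (Multiplier k A) where
  add_assoc a b c := by ext x <;> simp [add_assoc]
  zero_add a := by ext x <;> simp
  add_zero a := by ext x <;> simp
  add_comm a b := by ext x <;> simp [add_comm]
  neg_add_cancel a := by ext x <;> simp
  nsmul := nsmulRec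
  zsmul := zsmulRec

instance : Module k (Multiplier k A) where
  one_smul m := by ext x <;> simp
  mul_smul c d m := by ext x <;> simp [mul_smul]
  smul_zero c := by ext x <;> simp
  smul_add c m n := by ext x <;> simp
  add_smul c d m := by ext x <;> simp [add_smul]
  zero_smul m := by ext x <;> simp

instance : One (Multiplier k A) := ⟨⟨LinearMap.id, LinearMap.id, by simp, by simp, by simp⟩⟩
instance : Mul (Multiplier k A) :=
  ⟨fun m n => ⟨m.U ∘ₗ n.U, n.V ∘ₗ m.V,
    by simp [n.U_mul, m.U_mul],
    by simp [m.V_mul, n.V_mul],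
    by intro a b; simp only [LinearMap.comp_apply]; rw [n.compat, m.compat]⟩⟩

@[simp] lemma one_U : (1 : Multiplier k A).U = LinearMap.id := rfl
@[simp] lemma one_V : (1 : Multiplier k A).V = LinearMap.id := rfl
@[simp] lemma mul_U (m n : Multiplier k A) : (m * n).U = m.U ∘ₗ n.U := rfl
@[simp] lemma mul_V (m n : Multiplier k A) : (m * n).V = n.V ∘ₗ m.V := rfl

instance : Monoid (Multiplier k A) where
  mul_assoc a b c := by ext x <;> simp
  one_mul a := by ext x <;> simp
  mul_one a := by ext x <;> simp

/-- The canonical map `A → M(A)` given by left and right multiplication. -/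
def incl (a : A) : Multiplier k A :=
  ⟨LinearMap.mulLeft k a, LinearMap.mulRight k a,
    fun b c => by simp [mul_assoc], fun b c => by simp [mul_assoc],
    fun b c => by simp [mul_assoc]⟩

@[simp] lemma incl_U (a b : A) : (incl (k := k) a).U b = a * b := rfl
@[simp] lemma incl_V (a b : A) : (incl (k := k) a).V b = b * a := rfl

/-- The canonical map `A → M(A)` as a linear map. -/
def inclL : A →ₗ[k] Multiplier k A where
  toFun := incl
  map_add' a b := by ext x <;> simp [add_mul, mul_add]
  map_smul' c a := by ext x <;> simp [smul_mul_assoc, mul_smul_comm]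

@[simp] lemma inclL_apply (a : A) : (inclL (k := k) a) = incl a := rfl

/-- The `U`-component, as a linear map. -/
def Ulm : Multiplier k A →ₗ[k] A →ₗ[k] A where
  toFun m := m.U
  map_add' _ _ := rfl
  map_smul' _ _ := rfl

/-- The `V`-component, as a linear map. -/
def Vlm : Multiplier k A →ₗ[k] A →ₗ[k] A where
  toFun m := m.V
  map_add' _ _ := rfl
  map_smul' _ _ := rfl

end Multiplier

end MultiplierAlgebra

section Tensor

variable (R : Type*) [NonUnitalRing R] [Module k R] [SMulCommClass k R R] [IsScalarTower k R R]
variable (A : Type*) [NonUnitalRing A] [Module k A] [SMulCommClass k A A] [IsScalarTower k A A]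

/-- The multiplier `1 ⊗ a` of `R ⊗ A`. -/
def oneT (a : A) : Multiplier k (R ⊗[k] A) where
  U := lTensor R (LinearMap.mulLeft k a)
  V := lTensor R (LinearMap.mulRight k a)
  U_mul u v := by
    induction u with
    | zero => simp
    | add u₁ u₂ h₁ h₂ => simp [add_mul, h₁, h₂]
    | tmul x b =>
      induction v with
      | zero => simp
      | add v₁ v₂ h₁ h₂ => simp [mul_add, h₁, h₂]
      | tmul y c => simp [Algebra.TensorProduct.tmul_mul_tmul, mul_assoc]
  V_mul u v := by
    induction u with
    | zero => simp
    | add u₁ u₂ h₁ h₂ => simp [add_mul, h₁, h₂]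
    | tmul x b =>
      induction v with
      | zero => simp
      | add v₁ v₂ h₁ h₂ => simp [mul_add, h₁, h₂]
      | tmul y c => simp [Algebra.TensorProduct.tmul_mul_tmul, mul_assoc]
  compat u v := by
    induction u with
    | zero => simp
    | add u₁ u₂ h₁ h₂ => simp [add_mul, h₁, h₂]
    | tmul x b =>
      induction v with
      | zero => simp
      | add v₁ v₂ h₁ h₂ => simp only [map_add, mul_add, h₁, h₂]
      | tmul y c => simp [Algebra.TensorProduct.tmul_mul_tmul, mul_assoc]

/-- The multiplier `x ⊗ 1` of `R ⊗ A`. -/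
def tOne (x : R) : Multiplier k (R ⊗[k] A) where
  U := rTensor A (LinearMap.mulLeft k x)
  V := rTensor A (LinearMap.mulRight k x)
  U_mul u v := by
    induction u with
    | zero => simp
    | add u₁ u₂ h₁ h₂ => simp [add_mul, h₁, h₂]
    | tmul y b =>
      induction v with
      | zero => simp
      | add v₁ v₂ h₁ h₂ => simp [mul_add, h₁, h₂]
      | tmul z c => simp [Algebra.TensorProduct.tmul_mul_tmul, mul_assoc]
  V_mul u v := by
    induction u with
    | zero => simp
    | add u₁ u₂ h₁ h₂ => simp [add_mul, h₁, h₂]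
    | tmul y b =>
      induction v with
      | zero => simp
      | add v₁ v₂ h₁ h₂ => simp [mul_add, h₁, h₂]
      | tmul z c => simp [Algebra.TensorProduct.tmul_mul_tmul, mul_assoc]
  compat u v := by
    induction u with
    | zero => simp
    | add u₁ u₂ h₁ h₂ => simp [add_mul, h₁, h₂]
    | tmul y b =>
      induction v with
      | zero => simp
      | add v₁ v₂ h₁ h₂ => simp only [map_add, mul_add, h₁, h₂]
      | tmul z c => simp [Algebra.TensorProduct.tmul_mul_tmul, mul_assoc]

/-- The multiplier `m ⊗ a` of `R ⊗ A`, for `m ∈ M(R)`, `a ∈ A`. -/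
def mtensor (m : Multiplier k R) (a : A) : Multiplier k (R ⊗[k] A) where
  U := map m.U (LinearMap.mulLeft k a)
  V := map m.V (LinearMap.mulRight k a)
  U_mul u v := by
    induction u with
    | zero => simp
    | add u₁ u₂ h₁ h₂ => simp [add_mul, h₁, h₂]
    | tmul y b =>
      induction v with
      | zero => simp
      | add v₁ v₂ h₁ h₂ => simp [mul_add, h₁, h₂]
      | tmul z c => simp [Algebra.TensorProduct.tmul_mul_tmul, mul_assoc, m.U_mul]
  V_mul u v := by
    induction u with
    | zero => simp
    | add u₁ u₂ h₁ h₂ => simp [add_mul, h₁, h₂]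
    | tmul y b =>
      induction v with
      | zero => simp
      | add v₁ v₂ h₁ h₂ => simp [mul_add, h₁, h₂]
      | tmul z c => simp [Algebra.TensorProduct.tmul_mul_tmul, mul_assoc, m.V_mul]
  compat u v := by
    induction u with
    | zero => simp
    | add u₁ u₂ h₁ h₂ => simp [add_mul, h₁, h₂]
    | tmul y b =>
      induction v with
      | zero => simp
      | add v₁ v₂ h₁ h₂ => simp only [map_add, mul_add, h₁, h₂]
      | tmul z c => simp [Algebra.TensorProduct.tmul_mul_tmul, mul_assoc, m.compat]

/-- The multiplier `m ⊗ 1` of `R ⊗ A`, for `m ∈ M(R)`. -/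
def mtensorOne (m : Multiplier k R) : Multiplier k (R ⊗[k] A) where
  U := map m.U LinearMap.id
  V := map m.V LinearMap.id
  U_mul u v := by
    induction u with
    | zero => simp
    | add u₁ u₂ h₁ h₂ => simp [add_mul, h₁, h₂]
    | tmul y b =>
      induction v with
      | zero => simp
      | add v₁ v₂ h₁ h₂ => simp [mul_add, h₁, h₂]
      | tmul z c => simp [Algebra.TensorProduct.tmul_mul_tmul, m.U_mul]
  V_mul u v := by
    induction u with
    | zero => simp
    | add u₁ u₂ h₁ h₂ => simp [add_mul, h₁, h₂]
    | tmul y b =>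
      induction v with
      | zero => simp
      | add v₁ v₂ h₁ h₂ => simp [mul_add, h₁, h₂]
      | tmul z c => simp [Algebra.TensorProduct.tmul_mul_tmul, m.V_mul]
  compat u v := by
    induction u with
    | zero => simp
    | add u₁ u₂ h₁ h₂ => simp [add_mul, h₁, h₂]
    | tmul y b =>
      induction v with
      | zero => simp
      | add v₁ v₂ h₁ h₂ => simp only [map_add, mul_add, h₁, h₂]
      | tmul z c => simp [Algebra.TensorProduct.tmul_mul_tmul, m.compat]

/-- Apply a functional to the second tensor factor:  `x ⊗ a ↦ f a • x`. -/
def apT (f : A →ₗ[k] k) : R ⊗[k] A →ₗ[k] R :=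
  (TensorProduct.rid k R).toLinearMap ∘ₗ lTensor R f

@[simp] lemma apT_tmul (f : A →ₗ[k] k) (x : R) (a : A) :
    apT k R A f (x ⊗ₜ a) = f a • x := rfl

/-- Sum of pure tensors attached to a list of pairs. -/
def psum {M N : Type*} [AddCommGroup M] [Module k M] [AddCommGroup N] [Module k N]
    (l : List (M × N)) : M ⊗[k] N :=
  (l.map fun p => p.1 ⊗ₜ[k] p.2).sum

end Tensor
section MHAdef

variable (A : Type*) [NonUnitalRing A] [Module k A] [SMulCommClass k A A] [IsScalarTower k A A]

/-- Apply a functional to the first tensor factor: `a ⊗ b ↦ f a • b`. -/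
def apF (f : A →ₗ[k] k) : A ⊗[k] A →ₗ[k] A :=
  (TensorProduct.lid k A).toLinearMap ∘ₗ rTensor A f

@[simp] lemma apF_tmul (f : A →ₗ[k] k) (a b : A) : apF k A f (a ⊗ₜ b) = f a • b := rfl

/-- A *regular multiplier Hopf algebra* structure on a nondegenerate algebra `A`:
a comultiplication `Δ : A → M(A ⊗ A)` such that the four Galois-type maps
`T1 : a ⊗ b ↦ Δ(a)(1 ⊗ b)`, `T2 : a ⊗ b ↦ (a ⊗ 1)Δ(b)`, `T3 : a ⊗ b ↦ Δ(a)(b ⊗ 1)`,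
`T4 : a ⊗ b ↦ (1 ⊗ b)Δ(a)` are (well-defined and) bijective from `A ⊗ A` onto `A ⊗ A`,
together with its counit `ε` and (bijective) antipode `S`, subject to the usual axioms
(coassociativity and the counit and antipode laws, in their `T1`/`T2`-covered form). -/
structure MHA where
  nondeg : NondegProd A
  comul : A →ₗ[k] Multiplier k (A ⊗[k] A)
  comul_mul : ∀ a b : A, comul (a * b) = comul a * comul b
  T1 : A ⊗[k] A ≃ₗ[k] A ⊗[k] A
  T2 : A ⊗[k] A ≃ₗ[k] A ⊗[k] A
  T3 : A ⊗[k] A ≃ₗ[k] A ⊗[k] A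
  T4 : A ⊗[k] A ≃ₗ[k] A ⊗[k] A
  hT1 : ∀ a b : A, comul a * oneT k A A b = Multiplier.incl (T1 (a ⊗ₜ b))
  hT2 : ∀ a b : A, tOne k A A a * comul b = Multiplier.incl (T2 (a ⊗ₜ b))
  hT3 : ∀ a b : A, comul a * tOne k A A b = Multiplier.incl (T3 (a ⊗ₜ b))
  hT4 : ∀ a b : A, oneT k A A b * comul a = Multiplier.incl (T4 (a ⊗ₜ b))
  coassoc : ∀ a b c : A,
    (TensorProduct.assoc k A A A)
        ((rTensor A (T2.toLinearMap ∘ₗ TensorProduct.mk k A A a)) (T1 (b ⊗ₜ c)))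
      = (lTensor A (T1.toLinearMap ∘ₗ (TensorProduct.mk k A A).flip c)) (T2 (a ⊗ₜ b))
  counit : A →ₗ[k] k
  counit_mul : ∀ a b : A, counit (a * b) = counit a * counit b
  hcounit1 : ∀ a b : A, apF k A counit (T1 (a ⊗ₜ b)) = a * b
  hcounit2 : ∀ a b : A, apT k A A counit (T2 (a ⊗ₜ b)) = a * b
  S : A ≃ₗ[k] A
  S_antimul : ∀ a b : A, S (a * b) = S b * S a
  hS1 : ∀ a b : A, LinearMap.mul' k A ((rTensor A S.toLinearMap) (T1 (a ⊗ₜ b))) = counit a • b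
  hS2 : ∀ a b : A, LinearMap.mul' k A ((lTensor A S.toLinearMap) (T2 (a ⊗ₜ b))) = counit b • a

end MHAdef

section PComod

variable {k}
variable {A : Type*} [NonUnitalRing A] [Module k A] [SMulCommClass k A A] [IsScalarTower k A A]
variable (H : MHA k A)
variable (R : Type*) [NonUnitalRing R] [Module k R] [SMulCommClass k R R] [IsScalarTower k R R]

/-- `(R, ρ, E)` is a *partial `A`-comodule algebra* (Definition 3.5).  The data
`rmap`/`lmap` records the elements `ρ(x)(1 ⊗ a)` and `(1 ⊗ a)ρ(x)` of `R ⊗ A`.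
Condition `c3` is the coassociativity
`(ρ ⊗ ι)(ρ(x)) = (E ⊗ 1)(ι ⊗ Δ)(ρ(x))` in its fully covered form
`x⁽⁰⁾⁽⁰⁾ ⊗ x⁽⁰⁾⁽¹⁾a ⊗ x⁽¹⁾b = Σᵢ E(x⁽⁰⁾ ⊗ (x⁽¹⁾aᵢ)₍₁₎) ⊗ (x⁽¹⁾aᵢ)₍₂₎bᵢ`
for any representation `Σᵢ aᵢ ⊗ bᵢ = T1⁻¹(a ⊗ b)`. -/
structure IsPComod (ρ : R →ₗ[k] Multiplier k (R ⊗[k] A)) (E : Multiplier k (R ⊗[k] A))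
    (rmap : R →ₗ[k] A →ₗ[k] R ⊗[k] A) (lmap : A →ₗ[k] R →ₗ[k] R ⊗[k] A) : Prop where
  ρ_mul : ∀ x y : R, ρ (x * y) = ρ x * ρ y
  ρ_inj : Function.Injective ρ
  E_idem : E * E = E
  hrmap : ∀ (x : R) (a : A), ρ x * oneT k R A a = Multiplier.incl (rmap x a)
  hlmap : ∀ (a : A) (x : R), oneT k R A a * ρ x = Multiplier.incl (lmap a x)
  c1l : ∀ a : A, ∃ l : List (Multiplier k R × A),
      oneT k R A a * E = (l.map fun p => mtensor k R A p.1 p.2).sum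
  c1r : ∀ a : A, ∃ l : List (Multiplier k R × A),
      E * oneT k R A a = (l.map fun p => mtensor k R A p.1 p.2).sum
  c2l : ∀ (x : R) (a : A), ∃ u : R ⊗[k] A, rmap x a = E.U u
  c2r : ∀ (a : A) (x : R), ∃ u : R ⊗[k] A, lmap a x = E.V u
  c3 : ∀ (x : R) (a b : A) (l : List (A × A)), psum k l = H.T1.symm (a ⊗ₜ b) →
      rTensor A (rmap.flip a) (rmap x b)
        = (l.map fun p => (rTensor A E.U) ((TensorProduct.assoc k R A A).symm
            ((lTensor R (H.T1.toLinearMap ∘ₗ (TensorProduct.mk k A A).flip p.2))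
              (rmap x p.1)))).sum

/-- A *symmetric* partial `A`-comodule algebra (Definition 3.5 (iv)):  additionally
`(ρ ⊗ ι)(ρ(x)) = (ι ⊗ Δ)(ρ(x))(E ⊗ 1)`, in the fully covered form
`x⁽⁰⁾⁽⁰⁾ ⊗ ax⁽⁰⁾⁽¹⁾ ⊗ bx⁽¹⁾ = Σᵢ (x⁽⁰⁾ ⊗ (aᵢx⁽¹⁾)₍₁₎)E ⊗ bᵢ(aᵢx⁽¹⁾)₍₂₎` for any
representation `Σᵢ aᵢ ⊗ bᵢ = T4⁻¹(a ⊗ b)`. -/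
structure IsSymPComod (ρ : R →ₗ[k] Multiplier k (R ⊗[k] A)) (E : Multiplier k (R ⊗[k] A))
    (rmap : R →ₗ[k] A →ₗ[k] R ⊗[k] A) (lmap : A →ₗ[k] R →ₗ[k] R ⊗[k] A)
    extends IsPComod H R ρ E rmap lmap : Prop where
  c4 : ∀ (x : R) (a b : A) (l : List (A × A)), psum k l = H.T4.symm (a ⊗ₜ b) →
      rTensor A (lmap a) (lmap b x)
        = (l.map fun p => (rTensor A E.V) ((TensorProduct.assoc k R A A).symm
            ((lTensor R (H.T4.toLinearMap ∘ₗ (TensorProduct.mk k A A).flip p.2))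
              (lmap p.1 x)))).sum

/-- `R` is a (global) right `A`-comodule algebra via `ρ` (Definition 3.1), with
`rmap`/`lmap` recording `ρ(x)(1 ⊗ a) ∈ R ⊗ A` and `(1 ⊗ a)ρ(x) ∈ R ⊗ A`;
coassociativity `(ρ ⊗ ι)ρ = (ι ⊗ Δ)ρ` is stated in its fully covered form. -/
structure IsComod (ρ : R →ₗ[k] Multiplier k (R ⊗[k] A))
    (rmap : R →ₗ[k] A →ₗ[k] R ⊗[k] A) (lmap : A →ₗ[k] R →ₗ[k] R ⊗[k] A) : Prop where
  ρ_mul : ∀ x y : R, ρ (x * y) = ρ x * ρ y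
  ρ_inj : Function.Injective ρ
  hrmap : ∀ (x : R) (a : A), ρ x * oneT k R A a = Multiplier.incl (rmap x a)
  hlmap : ∀ (a : A) (x : R), oneT k R A a * ρ x = Multiplier.incl (lmap a x)
  coassoc : ∀ (x : R) (a b : A) (l : List (A × A)), psum k l = H.T1.symm (a ⊗ₜ b) →
      rTensor A (rmap.flip a) (rmap x b)
        = (l.map fun p => (TensorProduct.assoc k R A A).symm
            ((lTensor R (H.T1.toLinearMap ∘ₗ (TensorProduct.mk k A A).flip p.2))
              (rmap x p.1))).sum

end PComod
section PMod

variable {k}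
variable {A : Type*} [NonUnitalRing A] [Module k A] [SMulCommClass k A A] [IsScalarTower k A A]
variable (H : MHA k A)
variable (R : Type*) [NonUnitalRing R] [Module k R] [SMulCommClass k R R] [IsScalarTower k R R]

/-- `(R, ⬝, 𝔢)` is a *partial `A`-module algebra* (Definition 4.5).  Sweedler
expressions are stated for arbitrary list representations of the corresponding
covered elements; e.g. condition (i) reads
`a ⬝ (x (b ⬝ y)) = Σᵢ (pᵢ ⬝ x)(qᵢ ⬝ y)` whenever `Σᵢ pᵢ ⊗ qᵢ = Δ(a)(1 ⊗ b) = T1(a ⊗ b)`,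
and in (ii) one uses the covering `a₍₁₎ ⊗ S(a₍₂₎)b = (ι ⊗ S)((1 ⊗ S⁻¹(b))Δ(a))`. -/
structure IsPModAlg (act : A →ₗ[k] R →ₗ[k] R) (e : A →ₗ[k] Multiplier k R) : Prop where
  cond1 : ∀ (a b : A) (x y : R) (l : List (A × A)), psum k l = H.T1 (a ⊗ₜ b) →
      act a (x * act b y) = (l.map fun p => act p.1 x * act p.2 y).sum
  cond2a : ∀ (a b : A) (x : R) (l : List (A × A)), psum k l = H.T4 (a ⊗ₜ H.S.symm b) →
      (e a).U (act b x) = (l.map fun p => act p.1 (act (H.S p.2) x)).sum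
  cond2b : ∀ (a : A) (x : R),
      (e a).U x ∈ Submodule.span k {z : R | ∃ (b : A) (y : R), z = act b y}
  cond3 : ∀ (la : List A) (lx : List R), ∃ b : A,
      (∀ a ∈ la, a * b = a ∧ b * a = a) ∧ ∀ a ∈ la, ∀ x ∈ lx, act a x = act a (act b x)
  cond4 : ∀ x : R, (∀ a : A, act a x = 0) → x = 0

/-- A *symmetric* partial `A`-module algebra (Definition 4.5 (v)-(vii)).  In (vi),
one uses the covering `a₍₂₎ ⊗ S⁻¹(a₍₁₎)b = σ((S⁻¹ ⊗ ι)((S(b) ⊗ 1)Δ(a)))`. -/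
structure IsSymPModAlg (act : A →ₗ[k] R →ₗ[k] R) (e : A →ₗ[k] Multiplier k R)
    extends IsPModAlg H R act e : Prop where
  cond5 : ∀ (a b : A) (x y : R) (l : List (A × A)), psum k l = H.T3 (a ⊗ₜ b) →
      act a (act b x * y) = (l.map fun p => act p.1 x * act p.2 y).sum
  cond6 : ∀ (a b : A) (x : R) (l : List (A × A)), psum k l = H.T2 (H.S b ⊗ₜ a) →
      (e a).V (act b x) = (l.map fun p => act p.2 (act (H.S.symm p.1) x)).sum
  cond7 : ∀ (a : A) (x : R),
      (e a).V x ∈ Submodule.span k {z : R | ∃ (b : A) (y : R), z = act b y}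

/-- `R` is a (global, unitary) left `A`-module algebra (Definition 4.1). -/
structure IsModAlg (act : A →ₗ[k] R →ₗ[k] R) : Prop where
  assoc : ∀ (a b : A) (x : R), act a (act b x) = act (a * b) x
  unital : Submodule.span k {z : R | ∃ (a : A) (x : R), z = act a x} = ⊤
  mul_cond : ∀ (a b : A) (x y : R) (l : List (A × A)), psum k l = H.T1 (a ⊗ₜ b) →
      act a (x * act b y) = (l.map fun p => act p.1 x * act p.2 y).sum

end PMod

section Dual

variable {k}
variable {A : Type*} [NonUnitalRing A] [Module k A] [SMulCommClass k A A] [IsScalarTower k A A]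
variable (H : MHA k A)
variable (Ahat : Type*) [NonUnitalRing Ahat] [Module k Ahat] [SMulCommClass k Ahat Ahat]
  [IsScalarTower k Ahat Ahat] (Hh : MHA k Ahat)

/-- A realization of the *dual* `Â = {φ(– a) : a ∈ A}` of a regular multiplier Hopf
algebra `A` with left integral `φ` (as in (2.1)): a regular multiplier Hopf algebra
`Â` together with the linear bijections `hat : a ↦ φ(– a)` and `hat' : b ↦ φ(b –)`,
the evaluation pairing `ev`, the product rule `(ŵ û)(c) = (w ⊗ u)(Δ c)`, the
coproduct rules (2.5) and (2.6) read through `hat`, and the modular element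
`δ ∈ M(A)` of (5.1), `(φ ⊗ ι)Δ(a) = φ(a)δ`. -/
structure DualPair where
  φ : A →ₗ[k] k
  φ_ne : φ ≠ 0
  /-- `(ι ⊗ φ)((b ⊗ 1)Δ(a)) = φ(a) b` : left invariance of the integral. -/
  φ_int : ∀ a b : A, apT k A A φ (H.T2 (b ⊗ₜ a)) = φ a • b
  /-- `(ι ⊗ φ)(Δ(a)(b ⊗ 1)) = φ(a) b` : left invariance of the integral. -/
  φ_int' : ∀ a b : A, apT k A A φ (H.T3 (a ⊗ₜ b)) = φ a • b
  hat : A ≃ₗ[k] Ahat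
  hat' : A ≃ₗ[k] Ahat
  ev : Ahat →ₗ[k] A →ₗ[k] k
  ev_hat : ∀ a x : A, ev (hat a) x = φ (x * a)
  ev_hat' : ∀ b x : A, ev (hat' b) x = φ (b * x)
  /-- the product of `Â`: `(φ(– a) u)(c) = Σ φ(c₍₁₎ a) u(c₍₂₎)`. -/
  ev_mul : ∀ (a : A) (u : Ahat) (c : A),
      ev (hat a * u) c
        = (TensorProduct.lid k k) ((map φ (ev u)) (H.T3 (c ⊗ₜ a)))
  /-- identity (2.5): `Δ̂(φ(– a))(1 ⊗ φ(– b)) = φ(– S⁻¹(b₍₁₎)a) ⊗ φ(– b₍₂₎)`,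
  read through `hat⁻¹ ⊗ hat⁻¹` and covered on the right leg by `c`. -/
  hatT1 : ∀ a b c : A,
      (lTensor A (LinearMap.mulRight k c))
          ((map hat.symm.toLinearMap hat.symm.toLinearMap) (Hh.T1 (hat a ⊗ₜ hat b)))
        = rTensor A (LinearMap.mulRight k a ∘ₗ H.S.symm.toLinearMap) (H.T1 (b ⊗ₜ c))
  /-- identity (2.6): `(ι ⊗ Ŝ)((1 ⊗ Ŝ⁻¹(φ(– b)))Δ̂(φ(– a))) = φ(– b₍₁₎a) ⊗ φ(– b₍₂₎)`,
  read through `hat⁻¹ ⊗ hat⁻¹` and covered on the right leg by `c`. -/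
  hatT2 : ∀ a b c : A,
      (lTensor A (LinearMap.mulRight k c))
          ((map hat.symm.toLinearMap hat.symm.toLinearMap)
            ((lTensor Ahat Hh.S.toLinearMap) (Hh.T4 (hat a ⊗ₜ Hh.S.symm (hat b)))))
        = rTensor A (LinearMap.mulRight k a) (H.T1 (b ⊗ₜ c))
  /-- the modular element `δ`, with `(φ ⊗ ι)(Δ(a)(1 ⊗ b)) = φ(a) • (δ b)`. -/
  delta : Multiplier k A
  deltaInv : Multiplier k A
  delta_inv : delta * deltaInv = 1 ∧ deltaInv * delta = 1
  hdelta : ∀ a b : A, apF k A φ (H.T1 (a ⊗ₜ b)) = φ a • delta.U b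

end Dual

section IPAHelpers

namespace IPA

open TensorProduct LinearMap Multiplier

variable {k : Type*} [Field k]

section GenTensor

variable {M N P Q : Type*} [AddCommGroup M] [Module k M] [AddCommGroup N] [Module k N]
  [AddCommGroup P] [Module k P] [AddCommGroup Q] [Module k Q]

/-- Apply a functional to the first tensor factor. -/
noncomputable def apLf (μ : M →ₗ[k] k) : M ⊗[k] N →ₗ[k] N :=
  (TensorProduct.lid k N).toLinearMap ∘ₗ rTensor N μ

@[simp] lemma apLf_tmul (μ : M →ₗ[k] k) (m : M) (n : N) : apLf μ (m ⊗ₜ n) = μ m • n := rfl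

/-- Apply a functional to the second tensor factor. -/
noncomputable def apRf (ν : N →ₗ[k] k) : M ⊗[k] N →ₗ[k] M :=
  (TensorProduct.rid k M).toLinearMap ∘ₗ lTensor M ν

@[simp] lemma apRf_tmul (ν : N →ₗ[k] k) (m : M) (n : N) : apRf ν (m ⊗ₜ n) = ν n • m := rfl

lemma apLf_lTensor (μ : M →ₗ[k] k) (f : N →ₗ[k] P) (z : M ⊗[k] N) :
    apLf μ (lTensor M f z) = f (apLf μ z) := by
  induction z with
  | zero => simp
  | add u v hu hv => simp [hu, hv]
  | tmul m n => simp

lemma apLf_rTensor (μ : M →ₗ[k] k) (g : P →ₗ[k] M) (z : P ⊗[k] N) :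
    apLf μ (rTensor N g z) = apLf (μ ∘ₗ g) z := by
  induction z with
  | zero => simp
  | add u v hu hv => simp [hu, hv]
  | tmul m n => simp

lemma apRf_rTensor (ν : N →ₗ[k] k) (g : M →ₗ[k] P) (z : M ⊗[k] N) :
    apRf ν (rTensor N g z) = g (apRf ν z) := by
  induction z with
  | zero => simp
  | add u v hu hv => simp [hu, hv]
  | tmul m n => simp

lemma apRf_lTensor (ν : N →ₗ[k] k) (f : P →ₗ[k] N) (z : M ⊗[k] P) :
    apRf ν (lTensor M f z) = apRf (ν ∘ₗ f) z := by
  induction z with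
  | zero => simp
  | add u v hu hv => simp [hu, hv]
  | tmul m n => simp

lemma eq_zero_of_forall_apLf (z : M ⊗[k] N) (h : ∀ μ : M →ₗ[k] k, apLf μ z = 0) : z = 0 := by
  let bM := Module.Basis.ofVectorSpace k M
  let bN := Module.Basis.ofVectorSpace k N
  have key : ∀ (i) (j), ((bM.tensorProduct bN).repr z) (i, j) = bN.repr (apLf (bM.coord i) z) j := by
    intro i j
    clear h
    induction z with
    | zero => simp
    | add u v hu hv => simp [hu, hv]
    | tmul m n =>
      rw [Module.Basis.tensorProduct_repr_tmul_apply, apLf_tmul, map_smul]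
      simp [Module.Basis.coord_apply, smul_eq_mul, mul_comm]
  apply (bM.tensorProduct bN).repr.map_eq_zero_iff.mp
  ext p
  obtain ⟨i, j⟩ := p
  rw [key i j, h (bM.coord i)]
  simp

lemma apRf_comm (ν : N →ₗ[k] k) (z : M ⊗[k] N) :
    apRf ν z = apLf ν (TensorProduct.comm k M N z) := by
  induction z with
  | zero => simp
  | add u v hu hv => simp [hu, hv]
  | tmul m n => simp

lemma eq_zero_of_forall_apRf (z : M ⊗[k] N) (h : ∀ ν : N →ₗ[k] k, apRf ν z = 0) : z = 0 := by
  have : TensorProduct.comm k M N z = 0 := by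
    apply eq_zero_of_forall_apLf
    intro μ
    rw [← apRf_comm]
    exact h μ
  simpa using congrArg (TensorProduct.comm k M N).symm this

/-- A nonzero vector admits a functional taking value 1 on it. -/
lemma exists_dual_one {c : M} (hc : c ≠ 0) : ∃ g : M →ₗ[k] k, g c = 1 := by
  obtain ⟨g, hg⟩ := (Module.forall_dual_apply_eq_zero_iff k c).not.mpr hc |> not_forall.mp
  exact ⟨(g c)⁻¹ • g, by
    simp only [LinearMap.smul_apply, smul_eq_mul]
    field_simp⟩

end GenTensor

section Sep

variable {A : Type*} [NonUnitalRing A] [Module k A] [SMulCommClass k A A] [IsScalarTower k A A]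
variable {N : Type*} [AddCommGroup N] [Module k N]

lemma sep_first_mulLeft (hA : NondegProd A) (z : A ⊗[k] N)
    (h : ∀ x : A, rTensor N (LinearMap.mulLeft k x) z = 0) : z = 0 := by
  have hzero : ∀ ν : N →ₗ[k] k, apRf ν z = 0 := by
    intro ν
    have step : ∀ x : A, x * apRf ν z = 0 := by
      intro x
      have : x * apRf ν z = LinearMap.mulLeft k x (apRf ν z) := rfl
      rw [this, ← apRf_rTensor ν (LinearMap.mulLeft k x) z, h x, map_zero]
    exact hA.2 _ step
  exact eq_zero_of_forall_apRf z hzero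

lemma sep_first_mulRight (hA : NondegProd A) (z : A ⊗[k] N)
    (h : ∀ x : A, rTensor N (LinearMap.mulRight k x) z = 0) : z = 0 := by
  have hzero : ∀ ν : N →ₗ[k] k, apRf ν z = 0 := by
    intro ν
    have step : ∀ x : A, apRf ν z * x = 0 := by
      intro x
      have hh : apRf ν z * x = LinearMap.mulRight k x (apRf ν z) := rfl
      rw [hh, ← apRf_rTensor ν (LinearMap.mulRight k x) z, h x, map_zero]
    exact hA.1 _ step
  exact eq_zero_of_forall_apRf z hzero

lemma sep_second_mulLeft (hA : NondegProd A) (z : N ⊗[k] A)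
    (h : ∀ x : A, lTensor N (LinearMap.mulLeft k x) z = 0) : z = 0 := by
  have hzero : ∀ μ : N →ₗ[k] k, apLf μ z = 0 := by
    intro μ
    have step : ∀ x : A, x * apLf μ z = 0 := by
      intro x
      have hh : x * apLf μ z = LinearMap.mulLeft k x (apLf μ z) := rfl
      rw [hh, ← apLf_lTensor μ (LinearMap.mulLeft k x) z, h x, map_zero]
    exact hA.2 _ step
  exact eq_zero_of_forall_apLf z hzero

lemma sep_second_mulRight (hA : NondegProd A) (z : N ⊗[k] A)
    (h : ∀ x : A, lTensor N (LinearMap.mulRight k x) z = 0) : z = 0 := by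
  have hzero : ∀ μ : N →ₗ[k] k, apLf μ z = 0 := by
    intro μ
    have step : ∀ x : A, apLf μ z * x = 0 := by
      intro x
      have hh : apLf μ z * x = LinearMap.mulRight k x (apLf μ z) := rfl
      rw [hh, ← apLf_lTensor μ (LinearMap.mulRight k x) z, h x, map_zero]
    exact hA.1 _ step
  exact eq_zero_of_forall_apLf z hzero

lemma rl_comm {M₁ M₂ N₁ N₂ : Type*} [AddCommGroup M₁] [Module k M₁] [AddCommGroup M₂]
    [Module k M₂] [AddCommGroup N₁] [Module k N₁] [AddCommGroup N₂] [Module k N₂]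
    (f : M₁ →ₗ[k] M₂) (g : N₁ →ₗ[k] N₂) (z : M₁ ⊗[k] N₁) :
    rTensor N₂ f (lTensor M₁ g z) = lTensor M₂ g (rTensor N₁ f z) := by
  rw [← LinearMap.comp_apply, ← LinearMap.comp_apply, rTensor_comp_lTensor, lTensor_comp_rTensor]

/-- Membership separation: if all first-leg left-multiplied translates of `u` lie in the
range of `lTensor A f`, then so does `u`. -/
lemma mem_range_lTensor_of_forall (hA : NondegProd A) (f : A →ₗ[k] A) (u : A ⊗[k] A)
    (h : ∀ x : A, rTensor A (LinearMap.mulLeft k x) u ∈ LinearMap.range (lTensor A f)) :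
    u ∈ LinearMap.range (lTensor A f) := by
  set J := LinearMap.range f with hJ
  have hexact : Function.Exact f J.mkQ := by
    rw [LinearMap.exact_iff, Submodule.ker_mkQ]
  have hexact2 := lTensor_exact (R := k) A hexact (Submodule.mkQ_surjective J)
  have hker := LinearMap.exact_iff.mp hexact2
  rw [← hker, LinearMap.mem_ker]
  apply sep_first_mulLeft hA
  intro x
  rw [rl_comm (LinearMap.mulLeft k x) J.mkQ u]
  obtain ⟨w, hw⟩ := h x
  rw [← hw, ← LinearMap.comp_apply, ← lTensor_comp]
  have : J.mkQ ∘ₗ f = 0 := by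
    ext y
    simp [hJ, Submodule.Quotient.mk_eq_zero]
  rw [this, lTensor_zero, LinearMap.zero_apply]

set_option maxHeartbeats 1000000 in
lemma mem_range_rTensor_of_forall (hA : NondegProd A) (f : A →ₗ[k] A) (u : A ⊗[k] A)
    (h : ∀ x : A, lTensor A (LinearMap.mulRight k x) u ∈ LinearMap.range (rTensor A f)) :
    u ∈ LinearMap.range (rTensor A f) := by
  set J := LinearMap.range f with hJ
  have hexact : Function.Exact f J.mkQ := by
    rw [LinearMap.exact_iff, Submodule.ker_mkQ]
  have hexact2 := rTensor_exact (R := k) A hexact (Submodule.mkQ_surjective J)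
  have hker := LinearMap.exact_iff.mp hexact2
  rw [← hker, LinearMap.mem_ker]
  apply sep_second_mulRight hA
  intro x
  rw [← rl_comm J.mkQ (LinearMap.mulRight k x) u]
  obtain ⟨w, hw⟩ := h x
  rw [← hw, ← LinearMap.comp_apply, ← rTensor_comp]
  have : J.mkQ ∘ₗ f = 0 := by
    ext y
    simp [hJ, Submodule.Quotient.mk_eq_zero]
  rw [this, rTensor_zero, LinearMap.zero_apply]

end Sep

section Mult

variable {B : Type*} [NonUnitalRing B] [Module k B] [SMulCommClass k B B] [IsScalarTower k B B]

lemma incl_injective (hB : NondegProd B) {u v : B} (huv : Multiplier.incl (k := k) u = Multiplier.incl v) :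
    u = v := by
  have h : ∀ w, (u - v) * w = 0 := by
    intro w
    have h1 : (Multiplier.incl (k := k) u).U w = (Multiplier.incl (k := k) v).U w := by rw [huv]
    simp only [Multiplier.incl_U] at h1
    rw [sub_mul, h1, sub_self]
  have := hB.1 _ h
  exact sub_eq_zero.mp this

lemma mul_incl (m : Multiplier k B) (u : B) :
    m * Multiplier.incl u = Multiplier.incl (m.U u) := by
  ext x
  · show m.U (u * x) = m.U u * x
    exact m.U_mul u x
  · show m.V x * u = x * m.U u
    exact m.compat x u

lemma incl_mul (m : Multiplier k B) (u : B) :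
    Multiplier.incl u * m = Multiplier.incl (m.V u) := by
  ext x
  · show u * m.U x = m.V u * x
    exact (m.compat u x).symm
  · show m.V (x * u) = x * m.V u
    exact m.V_mul x u

end Mult

section TensorAlg

variable {A : Type*} [NonUnitalRing A] [Module k A] [SMulCommClass k A A] [IsScalarTower k A A]

lemma tensor_mul_right (u : A ⊗[k] A) (x y : A) :
    u * (x ⊗ₜ y) = map (LinearMap.mulRight k x) (LinearMap.mulRight k y) u := by
  induction u with
  | zero => simp
  | add u v hu hv => simp [add_mul, hu, hv]
  | tmul a b => simp [Algebra.TensorProduct.tmul_mul_tmul]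

lemma tensor_mul_left (u : A ⊗[k] A) (x y : A) :
    (x ⊗ₜ y) * u = map (LinearMap.mulLeft k x) (LinearMap.mulLeft k y) u := by
  induction u with
  | zero => simp
  | add u v hu hv => simp [mul_add, hu, hv]
  | tmul a b => simp [Algebra.TensorProduct.tmul_mul_tmul]

lemma nondeg_tensor (hA : NondegProd A) : NondegProd (A ⊗[k] A) := by
  constructor
  · intro u hu
    have h2 : ∀ y : A, lTensor A (LinearMap.mulRight k y) u = 0 := by
      intro y
      apply sep_first_mulRight hA
      intro x
      rw [← LinearMap.comp_apply, rTensor_comp_lTensor, ← tensor_mul_right]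
      exact hu _
    exact sep_second_mulRight hA u h2
  · intro u hu
    have h2 : ∀ y : A, lTensor A (LinearMap.mulLeft k y) u = 0 := by
      intro y
      apply sep_first_mulLeft hA
      intro x
      rw [← LinearMap.comp_apply, rTensor_comp_lTensor, ← tensor_mul_left]
      exact hu _
    exact sep_second_mulLeft hA u h2

lemma oneT_U (a : A) : (oneT k A A a).U = lTensor A (LinearMap.mulLeft k a) := rfl
lemma oneT_V (a : A) : (oneT k A A a).V = lTensor A (LinearMap.mulRight k a) := rfl
lemma tOne_U (x : A) : (tOne k A A x).U = rTensor A (LinearMap.mulLeft k x) := rfl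
lemma tOne_V (x : A) : (tOne k A A x).V = rTensor A (LinearMap.mulRight k x) := rfl

lemma oneT_mulM (a b : A) : oneT k A A (a * b) = oneT k A A a * oneT k A A b := by
  refine Multiplier.ext (LinearMap.ext fun z => ?_) (LinearMap.ext fun z => ?_)
  · show lTensor A (LinearMap.mulLeft k (a * b)) z
      = lTensor A (LinearMap.mulLeft k a) (lTensor A (LinearMap.mulLeft k b) z)
    rw [← LinearMap.comp_apply, ← lTensor_comp, ← LinearMap.mulLeft_mul]
  · show lTensor A (LinearMap.mulRight k (a * b)) z
      = lTensor A (LinearMap.mulRight k b) (lTensor A (LinearMap.mulRight k a) z)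
    rw [← LinearMap.comp_apply, ← lTensor_comp, ← LinearMap.mulRight_mul]

lemma tOne_mulM (a b : A) : tOne k A A (a * b) = tOne k A A a * tOne k A A b := by
  refine Multiplier.ext (LinearMap.ext fun z => ?_) (LinearMap.ext fun z => ?_)
  · show rTensor A (LinearMap.mulLeft k (a * b)) z
      = rTensor A (LinearMap.mulLeft k a) (rTensor A (LinearMap.mulLeft k b) z)
    rw [← LinearMap.comp_apply, ← rTensor_comp, ← LinearMap.mulLeft_mul]
  · show rTensor A (LinearMap.mulRight k (a * b)) z
      = rTensor A (LinearMap.mulRight k b) (rTensor A (LinearMap.mulRight k a) z)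
    rw [← LinearMap.comp_apply, ← rTensor_comp, ← LinearMap.mulRight_mul]

lemma tOne_oneT_comm (x a : A) :
    tOne k A A x * oneT k A A a = oneT k A A a * tOne k A A x := by
  refine Multiplier.ext (LinearMap.ext fun z => ?_) (LinearMap.ext fun z => ?_)
  · show rTensor A (LinearMap.mulLeft k x) (lTensor A (LinearMap.mulLeft k a) z)
      = lTensor A (LinearMap.mulLeft k a) (rTensor A (LinearMap.mulLeft k x) z)
    exact rl_comm _ _ _
  · show lTensor A (LinearMap.mulRight k a) (rTensor A (LinearMap.mulRight k x) z)
      = rTensor A (LinearMap.mulRight k x) (lTensor A (LinearMap.mulRight k a) z)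
    exact (rl_comm _ _ _).symm

lemma incl_tmul (x a : A) :
    Multiplier.incl (k := k) (x ⊗ₜ a) = tOne k A A x * oneT k A A a := by
  refine Multiplier.ext (LinearMap.ext fun z => ?_) (LinearMap.ext fun z => ?_)
  · show (x ⊗ₜ a) * z = rTensor A (LinearMap.mulLeft k x) (lTensor A (LinearMap.mulLeft k a) z)
    rw [tensor_mul_left, ← rTensor_comp_lTensor, LinearMap.comp_apply]
  · show z * (x ⊗ₜ a) = lTensor A (LinearMap.mulRight k a) (rTensor A (LinearMap.mulRight k x) z)
    rw [tensor_mul_right, ← lTensor_comp_rTensor, LinearMap.comp_apply]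

end TensorAlg

section Rels

variable {A : Type*} [NonUnitalRing A] [Module k A] [SMulCommClass k A A] [IsScalarTower k A A]

lemma incl_lmulL (z : A) (E : A ⊗[k] A) :
    Multiplier.incl (k := k) (lTensor A (LinearMap.mulLeft k z) E)
      = oneT k A A z * Multiplier.incl E := by
  rw [mul_incl]; rfl

lemma incl_lmulR (w : A) (E : A ⊗[k] A) :
    Multiplier.incl (k := k) (lTensor A (LinearMap.mulRight k w) E)
      = Multiplier.incl E * oneT k A A w := by
  rw [incl_mul]; rfl

lemma incl_rmulL (x : A) (E : A ⊗[k] A) :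
    Multiplier.incl (k := k) (rTensor A (LinearMap.mulLeft k x) E)
      = tOne k A A x * Multiplier.incl E := by
  rw [mul_incl]; rfl

lemma incl_rmulR (b : A) (E : A ⊗[k] A) :
    Multiplier.incl (k := k) (rTensor A (LinearMap.mulRight k b) E)
      = Multiplier.incl E * tOne k A A b := by
  rw [incl_mul]; rfl

variable (H : MHA k A)

lemma r_a (x y z : A) :
    rTensor A (LinearMap.mulLeft k x) (H.T1 (y ⊗ₜ z))
      = lTensor A (LinearMap.mulRight k z) (H.T2 (x ⊗ₜ y)) := by
  apply incl_injective (k := k) (nondeg_tensor H.nondeg)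
  rw [incl_rmulL, incl_lmulR, ← H.hT1, ← H.hT2, mul_assoc]

lemma r_c (w y z : A) :
    lTensor A (LinearMap.mulRight k w) (H.T4 (y ⊗ₜ z))
      = lTensor A (LinearMap.mulLeft k z) (H.T1 (y ⊗ₜ w)) := by
  apply incl_injective (k := k) (nondeg_tensor H.nondeg)
  rw [incl_lmulR, incl_lmulL, ← H.hT4, ← H.hT1, mul_assoc]

lemma r_e (x v c : A) :
    rTensor A (LinearMap.mulLeft k x) (H.T4 (v ⊗ₜ c))
      = lTensor A (LinearMap.mulLeft k c) (H.T2 (x ⊗ₜ v)) := by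
  apply incl_injective (k := k) (nondeg_tensor H.nondeg)
  rw [incl_rmulL, incl_lmulL, ← H.hT4, ← H.hT2, ← mul_assoc, ← mul_assoc, tOne_oneT_comm]

lemma r_f (w y z : A) :
    lTensor A (LinearMap.mulRight k w) (H.T1 (y ⊗ₜ z)) = H.T1 (y ⊗ₜ (z * w)) := by
  apply incl_injective (k := k) (nondeg_tensor H.nondeg)
  rw [incl_lmulR, ← H.hT1, ← H.hT1, oneT_mulM, mul_assoc]

lemma r_g (x p q : A) :
    rTensor A (LinearMap.mulLeft k x) (H.T2 (p ⊗ₜ q)) = H.T2 ((x * p) ⊗ₜ q) := by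
  apply incl_injective (k := k) (nondeg_tensor H.nondeg)
  rw [incl_rmulL, ← H.hT2, ← H.hT2, tOne_mulM, mul_assoc]

lemma r_j (a b c : A) :
    rTensor A (LinearMap.mulRight k b) (H.T1 (a ⊗ₜ c))
      = lTensor A (LinearMap.mulRight k c) (H.T3 (a ⊗ₜ b)) := by
  apply incl_injective (k := k) (nondeg_tensor H.nondeg)
  rw [incl_rmulR, incl_lmulR, ← H.hT1, ← H.hT3, mul_assoc, mul_assoc, tOne_oneT_comm]

lemma r_k (x b c : A) :
    rTensor A (LinearMap.mulLeft k x) (H.T3 (b ⊗ₜ c))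
      = rTensor A (LinearMap.mulRight k c) (H.T2 (x ⊗ₜ b)) := by
  apply incl_injective (k := k) (nondeg_tensor H.nondeg)
  rw [incl_rmulL, incl_rmulR, ← H.hT3, ← H.hT2, mul_assoc]

lemma r_T3R (a b w : A) :
    rTensor A (LinearMap.mulRight k w) (H.T3 (a ⊗ₜ b)) = H.T3 (a ⊗ₜ (b * w)) := by
  apply incl_injective (k := k) (nondeg_tensor H.nondeg)
  rw [incl_rmulR, ← H.hT3, ← H.hT3, tOne_mulM, mul_assoc]

lemma r_T4L (y x z : A) :
    lTensor A (LinearMap.mulLeft k y) (H.T4 (x ⊗ₜ z)) = H.T4 (x ⊗ₜ (y * z)) := by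
  apply incl_injective (k := k) (nondeg_tensor H.nondeg)
  rw [incl_lmulL, ← H.hT4, ← H.hT4, oneT_mulM, mul_assoc]

lemma cw1 (x p q : A) :
    (H.comul x).U (H.T1 (p ⊗ₜ q)) = H.T1 ((x * p) ⊗ₜ q) := by
  apply incl_injective (k := k) (nondeg_tensor H.nondeg)
  rw [← mul_incl, ← H.hT1, ← H.hT1, H.comul_mul, mul_assoc]

lemma cw1' (y p q : A) :
    (H.comul y).V (H.T2 (p ⊗ₜ q)) = H.T2 (p ⊗ₜ (q * y)) := by
  apply incl_injective (k := k) (nondeg_tensor H.nondeg)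
  rw [← incl_mul, ← H.hT2, ← H.hT2, H.comul_mul, mul_assoc]

lemma cw2 (x c a : A) :
    (H.comul x).U (c ⊗ₜ a) = lTensor A (LinearMap.mulRight k a) (H.T3 (x ⊗ₜ c)) := by
  apply incl_injective (k := k) (nondeg_tensor H.nondeg)
  rw [← mul_incl, incl_lmulR, incl_tmul, ← H.hT3, mul_assoc]

lemma cw2' (y a c : A) :
    (H.comul y).V (a ⊗ₜ c) = rTensor A (LinearMap.mulLeft k a) (H.T4 (y ⊗ₜ c)) := by
  apply incl_injective (k := k) (nondeg_tensor H.nondeg)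
  rw [← incl_mul, incl_rmulL, incl_tmul, ← H.hT4, mul_assoc]

end Rels

section Counit

variable {A : Type*} [NonUnitalRing A] [Module k A] [SMulCommClass k A A] [IsScalarTower k A A]

lemma cancel_left (hA : NondegProd A) {u v : A} (h : ∀ x, x * u = x * v) : u = v := by
  have : ∀ x, x * (u - v) = 0 := fun x => by rw [mul_sub, h x, sub_self]
  exact sub_eq_zero.mp (hA.2 _ this)

lemma cancel_right (hA : NondegProd A) {u v : A} (h : ∀ x, u * x = v * x) : u = v := by
  have : ∀ x, (u - v) * x = 0 := fun x => by rw [sub_mul, h x, sub_self]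
  exact sub_eq_zero.mp (hA.1 _ this)

lemma mulLeft_mul' (x : A) (u : A ⊗[k] A) :
    x * LinearMap.mul' k A u = LinearMap.mul' k A (rTensor A (LinearMap.mulLeft k x) u) := by
  induction u with
  | zero => simp
  | add u v hu hv => simp [mul_add, hu, hv]
  | tmul a b => simp [mul_assoc]

lemma mul'_mulRight (x : A) (u : A ⊗[k] A) :
    LinearMap.mul' k A u * x = LinearMap.mul' k A (lTensor A (LinearMap.mulRight k x) u) := by
  induction u with
  | zero => simp
  | add u v hu hv => simp [add_mul, hu, hv]
  | tmul a b => simp [mul_assoc]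

variable (H : MHA k A)

lemma apF_eq (f : A →ₗ[k] k) : apF k A f = apLf f := rfl

lemma apT_eq (f : A →ₗ[k] k) : apT k A A f = apRf f := rfl

lemma apRf_counit_mulRight (q : A) (z : A ⊗[k] A) :
    apRf (H.counit ∘ₗ LinearMap.mulRight k q) z = H.counit q • apRf H.counit z := by
  induction z with
  | zero => simp
  | add u v hu hv => simp [hu, hv]
  | tmul m n =>
    simp only [apRf_tmul, LinearMap.comp_apply, LinearMap.mulRight_apply, H.counit_mul,
      smul_smul, mul_comm]

lemma apLf_counit_mulLeft (x : A) (z : A ⊗[k] A) :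
    apLf (H.counit ∘ₗ LinearMap.mulLeft k x) z = H.counit x • apLf H.counit z := by
  induction z with
  | zero => simp
  | add u v hu hv => simp [hu, hv]
  | tmul m n =>
    simp only [apLf_tmul, LinearMap.comp_apply, LinearMap.mulLeft_apply, H.counit_mul,
      smul_smul]

/-- `(ι ⊗ ε)(T1(y ⊗ q)) = ε(q) y`. -/
lemma ct1 (y q : A) : apRf H.counit (H.T1 (y ⊗ₜ q)) = H.counit q • y := by
  apply cancel_left H.nondeg
  intro x
  have h1 : x * apRf H.counit (H.T1 (y ⊗ₜ q))
      = apRf H.counit (rTensor A (LinearMap.mulLeft k x) (H.T1 (y ⊗ₜ q))) := by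
    rw [apRf_rTensor]; rfl
  rw [h1, r_a H, apRf_lTensor, apRf_counit_mulRight H q, ← apT_eq, H.hcounit2]
  rw [mul_smul_comm]

/-- `(ε ⊗ ι)(T2(x ⊗ y)) = ε(x) y`. -/
lemma cf2 (x y : A) : apLf H.counit (H.T2 (x ⊗ₜ y)) = H.counit x • y := by
  apply cancel_right H.nondeg
  intro z
  have h1 : apLf H.counit (H.T2 (x ⊗ₜ y)) * z
      = apLf H.counit (lTensor A (LinearMap.mulRight k z) (H.T2 (x ⊗ₜ y))) := by
    rw [apLf_lTensor]; rfl
  rw [h1, ← r_a H, apLf_rTensor, apLf_counit_mulLeft H x, ← apF_eq, H.hcounit1]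
  rw [smul_mul_assoc]

/-- `(ι ⊗ ε)(T3(a ⊗ b)) = ab`. -/
lemma ct3 (a b : A) : apRf H.counit (H.T3 (a ⊗ₜ b)) = a * b := by
  apply cancel_left H.nondeg
  intro x
  have h1 : x * apRf H.counit (H.T3 (a ⊗ₜ b))
      = apRf H.counit (rTensor A (LinearMap.mulLeft k x) (H.T3 (a ⊗ₜ b))) := by
    rw [apRf_rTensor]; rfl
  rw [h1, r_k H, apRf_rTensor, ← apT_eq, H.hcounit2, LinearMap.mulRight_apply, mul_assoc]

/-- `(ε ⊗ ι)(T4(v ⊗ c)) = cv`, assuming `ε` attains the value 1. -/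
lemma cf4 (hone : ∃ c₁ : A, H.counit c₁ = 1) (v c : A) :
    apLf H.counit (H.T4 (v ⊗ₜ c)) = c * v := by
  obtain ⟨x, hx⟩ := hone
  have h2 := apLf_counit_mulLeft H x (H.T4 (v ⊗ₜ c))
  rw [hx, one_smul] at h2
  rw [← h2]
  have h1 : apLf (H.counit ∘ₗ LinearMap.mulLeft k x) (H.T4 (v ⊗ₜ c))
      = apLf H.counit (rTensor A (LinearMap.mulLeft k x) (H.T4 (v ⊗ₜ c))) :=
    (apLf_rTensor _ _ _).symm
  rw [h1, r_e H, apLf_lTensor, cf2 H, hx, one_smul, LinearMap.mulLeft_apply]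

/-- The counit attains the value 1 whenever `A ≠ 0`. -/
lemma exists_counit_one (hA0 : ∃ a : A, a ≠ 0) : ∃ c₁ : A, H.counit c₁ = 1 := by
  by_cases h : ∀ c, H.counit c = 0
  · exfalso
    obtain ⟨a, ha⟩ := hA0
    apply ha
    apply H.nondeg.1
    intro b
    have := H.hcounit1 a b
    have hz : apF k A H.counit = 0 := by
      have : H.counit = 0 := by ext c; exact h c
      rw [apF, this]
      ext u
      simp
    rw [hz] at this
    simpa using this.symm
  · push_neg at h
    obtain ⟨c, hc⟩ := h
    exact ⟨(H.counit c)⁻¹ • c, by simp [map_smul, smul_eq_mul, inv_mul_cancel₀ hc]⟩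

/-- `m(ι ⊗ S)(T4(v ⊗ c)) = ε(v) S(c)` (derived antipode law). -/
lemma L4 (v c : A) :
    LinearMap.mul' k A (lTensor A H.S.toLinearMap (H.T4 (v ⊗ₜ c)))
      = H.counit v • H.S c := by
  apply cancel_left H.nondeg
  intro x
  rw [mulLeft_mul', rl_comm (LinearMap.mulLeft k x) H.S.toLinearMap, r_e H]
  have hcomp : lTensor A H.S.toLinearMap (lTensor A (LinearMap.mulLeft k c) (H.T2 (x ⊗ₜ v)))
      = lTensor A (H.S.toLinearMap ∘ₗ LinearMap.mulLeft k c) (H.T2 (x ⊗ₜ v)) := by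
    rw [← LinearMap.comp_apply, ← lTensor_comp]
  rw [hcomp]
  have key : ∀ u : A ⊗[k] A, LinearMap.mul' k A
      (lTensor A (H.S.toLinearMap ∘ₗ LinearMap.mulLeft k c) u)
      = LinearMap.mul' k A (lTensor A H.S.toLinearMap u) * H.S c := by
    intro u
    induction u with
    | zero => simp
    | add u v hu hv => simp [hu, hv, add_mul]
    | tmul r s =>
      simp only [lTensor_tmul, LinearMap.comp_apply, LinearMap.mulLeft_apply,
        LinearMap.mul'_apply, LinearEquiv.coe_coe]
      rw [H.S_antimul, ← mul_assoc]
  rw [key, H.hS2, smul_mul_assoc, mul_smul_comm]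

/-- `m(S ⊗ ι)(T3(a ⊗ b)) = ε(a) S(b)` (derived antipode law). -/
lemma L3 (a b : A) :
    LinearMap.mul' k A (rTensor A H.S.toLinearMap (H.T3 (a ⊗ₜ b)))
      = H.counit a • H.S b := by
  apply cancel_right H.nondeg
  intro x
  rw [mul'_mulRight, ← rl_comm H.S.toLinearMap (LinearMap.mulRight k x), ← r_j H]
  have hcomp : rTensor A H.S.toLinearMap (rTensor A (LinearMap.mulRight k b) (H.T1 (a ⊗ₜ x)))
      = rTensor A (H.S.toLinearMap ∘ₗ LinearMap.mulRight k b) (H.T1 (a ⊗ₜ x)) := by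
    rw [← LinearMap.comp_apply, ← rTensor_comp]
  rw [hcomp]
  have key : ∀ u : A ⊗[k] A, LinearMap.mul' k A
      (rTensor A (H.S.toLinearMap ∘ₗ LinearMap.mulRight k b) u)
      = H.S b * LinearMap.mul' k A (rTensor A H.S.toLinearMap u) := by
    intro u
    induction u with
    | zero => simp
    | add u v hu hv => simp [hu, hv, mul_add]
    | tmul r s =>
      simp only [rTensor_tmul, LinearMap.comp_apply, LinearMap.mulRight_apply,
        LinearMap.mul'_apply, LinearEquiv.coe_coe]
      rw [H.S_antimul, mul_assoc]
  rw [key, H.hS1, mul_smul_comm, smul_mul_assoc]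

end Counit

section KPart

variable {A : Type*} [NonUnitalRing A] [Module k A] [SMulCommClass k A A] [IsScalarTower k A A]
variable (H : MHA k A)

lemma assoc_nat_third (f : A →ₗ[k] A) (u : (A ⊗[k] A) ⊗[k] A) :
    (TensorProduct.assoc k A A A) (lTensor (A ⊗[k] A) f u)
      = lTensor A (lTensor A f) ((TensorProduct.assoc k A A A) u) := by
  induction u with
  | zero => simp
  | add a b ha hb => simp [ha, hb]
  | tmul p r =>
    induction p with
    | zero => simp
    | add p q hp hq =>
      simp only [lTensor_tmul] at hp hq
      simp only [lTensor_tmul, add_tmul, map_add] at *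
      rw [hp, hq]
    | tmul p1 p2 => simp

/-- Covered coassociativity relating `T2` and `T4`:
`(Δ ⊗ ι)((1 ⊗ c)Δ(a))` covered by `x` equals `(ι ⊗ (1⊗c)Δ(–))((x ⊗ 1)Δ(a))`. -/
lemma IIp (x a c : A) :
    (TensorProduct.assoc k A A A)
        ((rTensor A (H.T2.toLinearMap ∘ₗ TensorProduct.mk k A A x)) (H.T4 (a ⊗ₜ c)))
      = (lTensor A (H.T4.toLinearMap ∘ₗ (TensorProduct.mk k A A).flip c)) (H.T2 (x ⊗ₜ a)) := by
  set F := H.T2.toLinearMap ∘ₗ TensorProduct.mk k A A x with hF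
  have key : ∀ w : A,
      lTensor A (lTensor A (LinearMap.mulRight k w))
        ((TensorProduct.assoc k A A A) ((rTensor A F) (H.T4 (a ⊗ₜ c))))
      = lTensor A (lTensor A (LinearMap.mulRight k w))
        ((lTensor A (H.T4.toLinearMap ∘ₗ (TensorProduct.mk k A A).flip c)) (H.T2 (x ⊗ₜ a))) := by
    intro w
    have hsame : (lTensor A (LinearMap.mulLeft k c)) ∘ₗ
          (H.T1.toLinearMap ∘ₗ (TensorProduct.mk k A A).flip w)
        = (lTensor A (LinearMap.mulRight k w)) ∘ₗ
          (H.T4.toLinearMap ∘ₗ (TensorProduct.mk k A A).flip c) := by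
      apply LinearMap.ext
      intro v
      simp only [LinearMap.comp_apply, LinearMap.flip_apply, TensorProduct.mk_apply,
        LinearEquiv.coe_coe]
      exact (r_c H w v c).symm
    rw [← assoc_nat_third, ← rl_comm F (LinearMap.mulRight k w), r_c H,
      rl_comm F (LinearMap.mulLeft k c), assoc_nat_third, H.coassoc,
      ← LinearMap.comp_apply (lTensor A (lTensor A (LinearMap.mulLeft k c))), ← lTensor_comp,
      hsame, lTensor_comp, LinearMap.comp_apply]
  set z := (TensorProduct.assoc k A A A) ((rTensor A F) (H.T4 (a ⊗ₜ c)))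
      - (lTensor A (H.T4.toLinearMap ∘ₗ (TensorProduct.mk k A A).flip c)) (H.T2 (x ⊗ₜ a)) with hz
  have hz0 : ∀ w : A, lTensor A (lTensor A (LinearMap.mulRight k w)) z = 0 := by
    intro w
    rw [hz, map_sub, key w, sub_self]
  have hz0' : ∀ w : A,
      lTensor (A ⊗[k] A) (LinearMap.mulRight k w) ((TensorProduct.assoc k A A A).symm z) = 0 := by
    intro w
    apply_fun (TensorProduct.assoc k A A A)
    · rw [assoc_nat_third, LinearEquiv.apply_symm_apply, hz0 w, map_zero]
    · exact (TensorProduct.assoc k A A A).injective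
  have := sep_second_mulRight H.nondeg _ hz0'
  have hzz : z = 0 := by
    have := congrArg (TensorProduct.assoc k A A A) this
    rwa [LinearEquiv.apply_symm_apply, map_zero] at this
  exact sub_eq_zero.mp hzz

/-- The fundamental antipode identity `T1 ∘ (ι ⊗ S) ∘ T4 = ι ⊗ S`. -/
lemma Kidentity (a c : A) :
    H.T1 ((lTensor A H.S.toLinearMap) (H.T4 (a ⊗ₜ c))) = a ⊗ₜ H.S c := by
  have main : ∀ x : A,
      rTensor A (LinearMap.mulLeft k x) (H.T1 ((lTensor A H.S.toLinearMap) (H.T4 (a ⊗ₜ c))))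
      = rTensor A (LinearMap.mulLeft k x) (a ⊗ₜ H.S c) := by
    intro x
    set ν : A ⊗[k] (A ⊗[k] A) →ₗ[k] A ⊗[k] A :=
      lTensor A ((LinearMap.mul' k A) ∘ₗ lTensor A H.S.toLinearMap) with hν
    have step1 :
        (rTensor A (LinearMap.mulLeft k x)) ∘ₗ (H.T1.toLinearMap ∘ₗ lTensor A H.S.toLinearMap)
        = ν ∘ₗ (TensorProduct.assoc k A A A).toLinearMap
            ∘ₗ (rTensor A (H.T2.toLinearMap ∘ₗ TensorProduct.mk k A A x)) := by
      apply TensorProduct.ext'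
      intro p q
      simp only [LinearMap.comp_apply, lTensor_tmul, LinearEquiv.coe_coe, rTensor_tmul,
        TensorProduct.mk_apply]
      have lhs := r_a H x p (H.S q)
      rw [lhs]
      -- now compute ν (assoc (T2(x⊗p) ⊗ q))
      have sub : ∀ (E : A ⊗[k] A),
          ν ((TensorProduct.assoc k A A A) (E ⊗ₜ q))
          = lTensor A (LinearMap.mulRight k (H.S q)) E := by
        intro E
        induction E with
        | zero => simp
        | add u v hu hv => simp [add_tmul, hu, hv]
        | tmul u v => simp [hν]
      rw [sub]
    have e1 : rTensor A (LinearMap.mulLeft k x)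
        (H.T1 ((lTensor A H.S.toLinearMap) (H.T4 (a ⊗ₜ c))))
        = ν ((TensorProduct.assoc k A A A)
            ((rTensor A (H.T2.toLinearMap ∘ₗ TensorProduct.mk k A A x)) (H.T4 (a ⊗ₜ c)))) := by
      have := congrArg (fun f => f (H.T4 (a ⊗ₜ c))) step1
      simpa using this
    rw [e1, IIp H]
    rw [hν, ← LinearMap.comp_apply, ← lTensor_comp]
    have inner : ((LinearMap.mul' k A) ∘ₗ lTensor A H.S.toLinearMap)
        ∘ₗ (H.T4.toLinearMap ∘ₗ (TensorProduct.mk k A A).flip c)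
        = H.counit.smulRight (H.S c) := by
      apply LinearMap.ext
      intro v
      simp only [LinearMap.comp_apply, LinearMap.flip_apply, TensorProduct.mk_apply,
        LinearEquiv.coe_coe, LinearMap.smulRight_apply]
      exact L4 H v c
    rw [inner]
    have final : ∀ u : A ⊗[k] A,
        lTensor A (H.counit.smulRight (H.S c)) u = (apRf H.counit u) ⊗ₜ H.S c := by
      intro u
      induction u with
      | zero => simp
      | add u v hu hv => simp [hu, hv, add_tmul]
      | tmul u v => simp [smul_tmul']
    rw [final, ← apT_eq, H.hcounit2]
    simp
  have hdiff : ∀ x : A, rTensor A (LinearMap.mulLeft k x)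
      (H.T1 ((lTensor A H.S.toLinearMap) (H.T4 (a ⊗ₜ c))) - a ⊗ₜ H.S c) = 0 := by
    intro x
    rw [map_sub, main x, sub_self]
  have := sep_first_mulLeft H.nondeg _ hdiff
  exact sub_eq_zero.mp this

end KPart

section MXPart

variable {A : Type*} [NonUnitalRing A] [Module k A] [SMulCommClass k A A] [IsScalarTower k A A]
variable (H : MHA k A)

lemma assoc_nat_first (g : A →ₗ[k] A) (u : (A ⊗[k] A) ⊗[k] A) :
    (TensorProduct.assoc k A A A) (rTensor A (rTensor A g) u)
      = rTensor (A ⊗[k] A) g ((TensorProduct.assoc k A A A) u) := by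
  induction u with
  | zero => simp
  | add a b ha hb => simp [ha, hb]
  | tmul p r =>
    induction p with
    | zero => simp
    | add p q hp hq =>
      simp only [rTensor_tmul] at hp hq
      simp only [rTensor_tmul, add_tmul, map_add] at *
      rw [hp, hq]
    | tmul p1 p2 => simp

/-- `T2`–`T1` covered coassociativity in the `T3`-twisted form (inner identity for `MX`). -/
lemma MX2 (b c w : A) :
    (TensorProduct.assoc k A A A)
        ((rTensor A (H.T3.toLinearMap ∘ₗ (TensorProduct.mk k A A).flip c)) (H.T1 (b ⊗ₜ w)))
      = (lTensor A (H.T1.toLinearMap ∘ₗ (TensorProduct.mk k A A).flip w)) (H.T3 (b ⊗ₜ c)) := by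
  set G := H.T3.toLinearMap ∘ₗ (TensorProduct.mk k A A).flip c with hG
  have key : ∀ x : A,
      rTensor (A ⊗[k] A) (LinearMap.mulLeft k x)
        ((TensorProduct.assoc k A A A) ((rTensor A G) (H.T1 (b ⊗ₜ w))))
      = rTensor (A ⊗[k] A) (LinearMap.mulLeft k x)
        ((lTensor A (H.T1.toLinearMap ∘ₗ (TensorProduct.mk k A A).flip w)) (H.T3 (b ⊗ₜ c))) := by
    intro x
    have hinner : (rTensor A (LinearMap.mulLeft k x)) ∘ₗ G
        = (rTensor A (LinearMap.mulRight k c)) ∘ₗ (H.T2.toLinearMap ∘ₗ TensorProduct.mk k A A x) := by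
      apply LinearMap.ext
      intro v
      simp only [LinearMap.comp_apply, LinearMap.flip_apply, TensorProduct.mk_apply,
        LinearEquiv.coe_coe, hG]
      exact r_k H x v c
    calc rTensor (A ⊗[k] A) (LinearMap.mulLeft k x)
          ((TensorProduct.assoc k A A A) ((rTensor A G) (H.T1 (b ⊗ₜ w))))
        = (TensorProduct.assoc k A A A)
            (rTensor A (rTensor A (LinearMap.mulLeft k x)) ((rTensor A G) (H.T1 (b ⊗ₜ w)))) :=
          (assoc_nat_first _ _).symm
      _ = (TensorProduct.assoc k A A A)
            (rTensor A ((rTensor A (LinearMap.mulLeft k x)) ∘ₗ G) (H.T1 (b ⊗ₜ w))) := by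
          rw [← LinearMap.comp_apply, ← rTensor_comp]
      _ = (TensorProduct.assoc k A A A)
            (rTensor A ((rTensor A (LinearMap.mulRight k c)) ∘ₗ
              (H.T2.toLinearMap ∘ₗ TensorProduct.mk k A A x)) (H.T1 (b ⊗ₜ w))) := by rw [hinner]
      _ = (TensorProduct.assoc k A A A)
            (rTensor A (rTensor A (LinearMap.mulRight k c))
              ((rTensor A (H.T2.toLinearMap ∘ₗ TensorProduct.mk k A A x)) (H.T1 (b ⊗ₜ w)))) := by
          rw [← LinearMap.comp_apply (rTensor A (rTensor A (LinearMap.mulRight k c))),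
            ← rTensor_comp]
      _ = rTensor (A ⊗[k] A) (LinearMap.mulRight k c)
            ((TensorProduct.assoc k A A A)
              ((rTensor A (H.T2.toLinearMap ∘ₗ TensorProduct.mk k A A x)) (H.T1 (b ⊗ₜ w)))) :=
          assoc_nat_first _ _
      _ = rTensor (A ⊗[k] A) (LinearMap.mulRight k c)
            ((lTensor A (H.T1.toLinearMap ∘ₗ (TensorProduct.mk k A A).flip w)) (H.T2 (x ⊗ₜ b))) := by
          rw [H.coassoc]
      _ = (lTensor A (H.T1.toLinearMap ∘ₗ (TensorProduct.mk k A A).flip w))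
            (rTensor A (LinearMap.mulRight k c) (H.T2 (x ⊗ₜ b))) :=
          rl_comm _ _ _
      _ = (lTensor A (H.T1.toLinearMap ∘ₗ (TensorProduct.mk k A A).flip w))
            (rTensor A (LinearMap.mulLeft k x) (H.T3 (b ⊗ₜ c))) := by rw [← r_k H]
      _ = rTensor (A ⊗[k] A) (LinearMap.mulLeft k x)
          ((lTensor A (H.T1.toLinearMap ∘ₗ (TensorProduct.mk k A A).flip w)) (H.T3 (b ⊗ₜ c))) :=
          (rl_comm _ _ _).symm
  set z := (TensorProduct.assoc k A A A) ((rTensor A G) (H.T1 (b ⊗ₜ w)))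
      - (lTensor A (H.T1.toLinearMap ∘ₗ (TensorProduct.mk k A A).flip w)) (H.T3 (b ⊗ₜ c)) with hz
  have hz0 : ∀ x : A, rTensor (A ⊗[k] A) (LinearMap.mulLeft k x) z = 0 := by
    intro x
    rw [hz, map_sub, key x, sub_self]
  exact sub_eq_zero.mp (sep_first_mulLeft H.nondeg _ hz0)

/-- Mixed covered coassociativity relating `T3` and `T4`. -/
lemma MX (a b c : A) :
    (TensorProduct.assoc k A A A)
        ((rTensor A (H.T3.toLinearMap ∘ₗ (TensorProduct.mk k A A).flip c)) (H.T4 (b ⊗ₜ a)))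
      = (lTensor A (H.T4.toLinearMap ∘ₗ (TensorProduct.mk k A A).flip a)) (H.T3 (b ⊗ₜ c)) := by
  set G := H.T3.toLinearMap ∘ₗ (TensorProduct.mk k A A).flip c with hG
  have key : ∀ w : A,
      lTensor A (lTensor A (LinearMap.mulRight k w))
        ((TensorProduct.assoc k A A A) ((rTensor A G) (H.T4 (b ⊗ₜ a))))
      = lTensor A (lTensor A (LinearMap.mulRight k w))
        ((lTensor A (H.T4.toLinearMap ∘ₗ (TensorProduct.mk k A A).flip a)) (H.T3 (b ⊗ₜ c))) := by
    intro w
    have hsame : (lTensor A (LinearMap.mulLeft k a)) ∘ₗ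
          (H.T1.toLinearMap ∘ₗ (TensorProduct.mk k A A).flip w)
        = (lTensor A (LinearMap.mulRight k w)) ∘ₗ
          (H.T4.toLinearMap ∘ₗ (TensorProduct.mk k A A).flip a) := by
      apply LinearMap.ext
      intro v
      simp only [LinearMap.comp_apply, LinearMap.flip_apply, TensorProduct.mk_apply,
        LinearEquiv.coe_coe]
      exact (r_c H w v a).symm
    rw [← assoc_nat_third, ← rl_comm G (LinearMap.mulRight k w), r_c H,
      rl_comm G (LinearMap.mulLeft k a), assoc_nat_third, MX2 H,
      ← LinearMap.comp_apply (lTensor A (lTensor A (LinearMap.mulLeft k a))), ← lTensor_comp,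
      hsame, lTensor_comp, LinearMap.comp_apply]
  set z := (TensorProduct.assoc k A A A) ((rTensor A G) (H.T4 (b ⊗ₜ a)))
      - (lTensor A (H.T4.toLinearMap ∘ₗ (TensorProduct.mk k A A).flip a)) (H.T3 (b ⊗ₜ c)) with hz
  have hz0 : ∀ w : A, lTensor A (lTensor A (LinearMap.mulRight k w)) z = 0 := by
    intro w
    rw [hz, map_sub, key w, sub_self]
  have hz0' : ∀ w : A,
      lTensor (A ⊗[k] A) (LinearMap.mulRight k w) ((TensorProduct.assoc k A A A).symm z) = 0 := by
    intro w
    apply_fun (TensorProduct.assoc k A A A)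
    · rw [assoc_nat_third, LinearEquiv.apply_symm_apply, hz0 w, map_zero]
    · exact (TensorProduct.assoc k A A A).injective
  have h0 := sep_second_mulRight H.nondeg _ hz0'
  have hzz : z = 0 := by
    have := congrArg (TensorProduct.assoc k A A A) h0
    rwa [LinearEquiv.apply_symm_apply, map_zero] at this
  exact sub_eq_zero.mp hzz

end MXPart

section CopPart

variable {A : Type*} [NonUnitalRing A] [Module k A] [SMulCommClass k A A] [IsScalarTower k A A]

local notation "σ" => TensorProduct.comm k A A

lemma comm_comm (u : A ⊗[k] A) : σ (σ u) = u := by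
  induction u with
  | zero => simp
  | add a b ha hb => simp [ha, hb]
  | tmul a b => simp

lemma comm_mulT (u v : A ⊗[k] A) : σ (u * v) = σ u * σ v := by
  induction u with
  | zero => simp
  | add a b ha hb => simp [add_mul, ha, hb]
  | tmul a b =>
    induction v with
    | zero => simp
    | add c d hc hd => simp [mul_add, hc, hd]
    | tmul c d => simp [Algebra.TensorProduct.tmul_mul_tmul]

lemma comm_lTensor (f : A →ₗ[k] A) (u : A ⊗[k] A) :
    σ (lTensor A f u) = rTensor A f (σ u) := by
  induction u with
  | zero => simp
  | add a b ha hb => simp [ha, hb]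
  | tmul a b => simp

lemma comm_rTensor (f : A →ₗ[k] A) (u : A ⊗[k] A) :
    σ (rTensor A f u) = lTensor A f (σ u) := by
  induction u with
  | zero => simp
  | add a b ha hb => simp [ha, hb]
  | tmul a b => simp

/-- Conjugation of a multiplier of `A ⊗ A` by the flip. -/
noncomputable def sconj (m : Multiplier k (A ⊗[k] A)) : Multiplier k (A ⊗[k] A) where
  U := (σ).toLinearMap ∘ₗ m.U ∘ₗ (σ).toLinearMap
  V := (σ).toLinearMap ∘ₗ m.V ∘ₗ (σ).toLinearMap
  U_mul := by
    intro a b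
    simp only [LinearMap.comp_apply, LinearEquiv.coe_coe]
    rw [comm_mulT, m.U_mul, comm_mulT, comm_comm]
  V_mul := by
    intro a b
    simp only [LinearMap.comp_apply, LinearEquiv.coe_coe]
    rw [comm_mulT, m.V_mul, comm_mulT, comm_comm]
  compat := by
    intro a b
    simp only [LinearMap.comp_apply, LinearEquiv.coe_coe]
    calc σ (m.V (σ a)) * b = σ (m.V (σ a)) * σ (σ b) := by rw [comm_comm]
      _ = σ (m.V (σ a) * σ b) := (comm_mulT _ _).symm
      _ = σ (σ a * m.U (σ b)) := by rw [m.compat]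
      _ = σ (σ a) * σ (m.U (σ b)) := comm_mulT _ _
      _ = a * σ (m.U (σ b)) := by rw [comm_comm]

@[simp] lemma sconj_U (m : Multiplier k (A ⊗[k] A)) (u : A ⊗[k] A) :
    (sconj m).U u = σ (m.U (σ u)) := rfl

@[simp] lemma sconj_V (m : Multiplier k (A ⊗[k] A)) (u : A ⊗[k] A) :
    (sconj m).V u = σ (m.V (σ u)) := rfl

lemma sconj_add (m n : Multiplier k (A ⊗[k] A)) : sconj (m + n) = sconj m + sconj n := by
  refine Multiplier.ext (LinearMap.ext fun u => ?_) (LinearMap.ext fun u => ?_) <;> simp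

lemma sconj_smul (c : k) (m : Multiplier k (A ⊗[k] A)) : sconj (c • m) = c • sconj m := by
  refine Multiplier.ext (LinearMap.ext fun u => ?_) (LinearMap.ext fun u => ?_) <;> simp

lemma sconj_mul (m n : Multiplier k (A ⊗[k] A)) : sconj (m * n) = sconj m * sconj n := by
  refine Multiplier.ext (LinearMap.ext fun u => ?_) (LinearMap.ext fun u => ?_) <;>
    simp [comm_comm]

/-- The permutation `p ⊗ (q ⊗ r) ↦ r ⊗ (q ⊗ p)`. -/
noncomputable def d13 : A ⊗[k] (A ⊗[k] A) →ₗ[k] A ⊗[k] (A ⊗[k] A) :=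
  lTensor A (σ).toLinearMap ∘ₗ (TensorProduct.assoc k A A A).toLinearMap
    ∘ₗ rTensor A (σ).toLinearMap ∘ₗ (TensorProduct.assoc k A A A).symm.toLinearMap
    ∘ₗ lTensor A (σ).toLinearMap

@[simp] lemma d13_tmul (p q r : A) :
    d13 (p ⊗ₜ[k] (q ⊗ₜ[k] r)) = r ⊗ₜ[k] (q ⊗ₜ[k] p) := by
  simp [d13]

variable (H : MHA k A)

lemma claimA (a : A) (E : A ⊗[k] A) :
    (TensorProduct.assoc k A A A)
        ((rTensor A ((σ).toLinearMap ∘ₗ H.T4.toLinearMap ∘ₗ (TensorProduct.mk k A A).flip a))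
          (σ E))
      = d13 ((lTensor A (H.T4.toLinearMap ∘ₗ (TensorProduct.mk k A A).flip a)) E) := by
  have sub1 : ∀ (F : A ⊗[k] A) (u : A),
      (TensorProduct.assoc k A A A) ((σ F) ⊗ₜ u) = d13 (u ⊗ₜ F) := by
    intro F u
    induction F with
    | zero => simp
    | add p q hp hq => simp only [map_add, add_tmul, tmul_add, hp, hq]
    | tmul y z => simp
  induction E with
  | zero => simp
  | add p q hp hq => simp only [map_add, hp, hq]
  | tmul u v =>
    simp only [TensorProduct.comm_tmul, rTensor_tmul, lTensor_tmul, LinearMap.comp_apply,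
      LinearMap.flip_apply, TensorProduct.mk_apply, LinearEquiv.coe_coe]
    exact sub1 (H.T4 (v ⊗ₜ a)) u

lemma claimB (c : A) (E : A ⊗[k] A) :
    (lTensor A ((σ).toLinearMap ∘ₗ H.T3.toLinearMap ∘ₗ (TensorProduct.mk k A A).flip c))
        (σ E)
      = d13 ((TensorProduct.assoc k A A A)
          ((rTensor A (H.T3.toLinearMap ∘ₗ (TensorProduct.mk k A A).flip c)) E)) := by
  have sub2 : ∀ (F : A ⊗[k] A) (v : A),
      v ⊗ₜ (σ F) = d13 ((TensorProduct.assoc k A A A) (F ⊗ₜ v)) := by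
    intro F v
    induction F with
    | zero => simp
    | add p q hp hq => simp only [map_add, add_tmul, tmul_add, hp, hq]
    | tmul m n => simp
  induction E with
  | zero => simp
  | add p q hp hq => simp only [map_add, hp, hq]
  | tmul u v =>
    simp only [TensorProduct.comm_tmul, rTensor_tmul, lTensor_tmul, LinearMap.comp_apply,
      LinearMap.flip_apply, TensorProduct.mk_apply, LinearEquiv.coe_coe]
    exact sub2 (H.T3 (u ⊗ₜ c)) v

lemma SXrT (E : A ⊗[k] A) :
    H.S (LinearMap.mul' k A ((rTensor A H.S.symm.toLinearMap) (σ E)))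
      = LinearMap.mul' k A ((rTensor A H.S.toLinearMap) E) := by
  induction E with
  | zero => simp
  | add p q hp hq => simp only [map_add, hp, hq]
  | tmul u v =>
    simp only [TensorProduct.comm_tmul, rTensor_tmul, LinearMap.mul'_apply, LinearEquiv.coe_coe]
    rw [H.S_antimul, LinearEquiv.apply_symm_apply]

lemma SXlT (E : A ⊗[k] A) :
    H.S (LinearMap.mul' k A ((lTensor A H.S.symm.toLinearMap) (σ E)))
      = LinearMap.mul' k A ((lTensor A H.S.toLinearMap) E) := by
  induction E with
  | zero => simp
  | add p q hp hq => simp only [map_add, hp, hq]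
  | tmul u v =>
    simp only [TensorProduct.comm_tmul, lTensor_tmul, LinearMap.mul'_apply, LinearEquiv.coe_coe]
    rw [H.S_antimul, LinearEquiv.apply_symm_apply]

/-- The co-opposite multiplier Hopf algebra. -/
noncomputable def cop (hone : ∃ c₁ : A, H.counit c₁ = 1) : MHA k A where
  nondeg := H.nondeg
  comul :=
    { toFun := fun a => sconj (H.comul a)
      map_add' := fun a b => by
        show sconj (H.comul (a + b)) = sconj (H.comul a) + sconj (H.comul b)
        rw [map_add, sconj_add]
      map_smul' := fun c a => by
        show sconj (H.comul (c • a)) = c • sconj (H.comul a)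
        rw [map_smul, sconj_smul] }
  comul_mul := fun a b => by
    simp only [LinearMap.coe_mk, AddHom.coe_mk]
    rw [H.comul_mul, sconj_mul]
  T1 := H.T3 ≪≫ₗ σ
  T2 := (σ : A ⊗[k] A ≃ₗ[k] A ⊗[k] A) ≪≫ₗ H.T4 ≪≫ₗ σ
  T3 := H.T1 ≪≫ₗ σ
  T4 := (σ : A ⊗[k] A ≃ₗ[k] A ⊗[k] A) ≪≫ₗ H.T2 ≪≫ₗ σ
  hT1 := by
    intro a b
    refine Multiplier.ext (LinearMap.ext fun u => ?_) (LinearMap.ext fun u => ?_)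
    · show σ ((H.comul a).U (σ (lTensor A (LinearMap.mulLeft k b) u)))
        = σ (H.T3 (a ⊗ₜ b)) * u
      rw [comm_lTensor]
      have h1 : (H.comul a).U (rTensor A (LinearMap.mulLeft k b) (σ u))
          = ((H.comul a) * (tOne k A A b)).U (σ u) := rfl
      rw [h1, H.hT3, Multiplier.incl_U, comm_mulT, comm_comm]
    · show lTensor A (LinearMap.mulRight k b) (σ ((H.comul a).V (σ u)))
        = u * σ (H.T3 (a ⊗ₜ b))
      rw [← comm_rTensor]
      have h1 : rTensor A (LinearMap.mulRight k b) ((H.comul a).V (σ u))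
          = ((H.comul a) * (tOne k A A b)).V (σ u) := rfl
      rw [h1, H.hT3, Multiplier.incl_V, comm_mulT, comm_comm]
  hT2 := by
    intro a b
    refine Multiplier.ext (LinearMap.ext fun u => ?_) (LinearMap.ext fun u => ?_)
    · show rTensor A (LinearMap.mulLeft k a) (σ ((H.comul b).U (σ u)))
        = σ (H.T4 (σ (a ⊗ₜ b))) * u
      rw [← comm_lTensor]
      have h1 : lTensor A (LinearMap.mulLeft k a) ((H.comul b).U (σ u))
          = ((oneT k A A a) * (H.comul b)).U (σ u) := rfl
      rw [h1, H.hT4, Multiplier.incl_U, comm_mulT, comm_comm, TensorProduct.comm_tmul]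
    · show σ ((H.comul b).V (σ (rTensor A (LinearMap.mulRight k a) u)))
        = u * σ (H.T4 (σ (a ⊗ₜ b)))
      rw [comm_rTensor]
      have h1 : (H.comul b).V (lTensor A (LinearMap.mulRight k a) (σ u))
          = ((oneT k A A a) * (H.comul b)).V (σ u) := rfl
      rw [h1, H.hT4, Multiplier.incl_V, comm_mulT, comm_comm, TensorProduct.comm_tmul]
  hT3 := by
    intro a b
    refine Multiplier.ext (LinearMap.ext fun u => ?_) (LinearMap.ext fun u => ?_)
    · show σ ((H.comul a).U (σ (rTensor A (LinearMap.mulLeft k b) u)))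
        = σ (H.T1 (a ⊗ₜ b)) * u
      rw [comm_rTensor]
      have h1 : (H.comul a).U (lTensor A (LinearMap.mulLeft k b) (σ u))
          = ((H.comul a) * (oneT k A A b)).U (σ u) := rfl
      rw [h1, H.hT1, Multiplier.incl_U, comm_mulT, comm_comm]
    · show rTensor A (LinearMap.mulRight k b) (σ ((H.comul a).V (σ u)))
        = u * σ (H.T1 (a ⊗ₜ b))
      rw [← comm_lTensor]
      have h1 : lTensor A (LinearMap.mulRight k b) ((H.comul a).V (σ u))
          = ((H.comul a) * (oneT k A A b)).V (σ u) := rfl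
      rw [h1, H.hT1, Multiplier.incl_V, comm_mulT, comm_comm]
  hT4 := by
    intro a b
    refine Multiplier.ext (LinearMap.ext fun u => ?_) (LinearMap.ext fun u => ?_)
    · show lTensor A (LinearMap.mulLeft k b) (σ ((H.comul a).U (σ u)))
        = σ (H.T2 (σ (a ⊗ₜ b))) * u
      rw [← comm_rTensor]
      have h1 : rTensor A (LinearMap.mulLeft k b) ((H.comul a).U (σ u))
          = ((tOne k A A b) * (H.comul a)).U (σ u) := rfl
      rw [h1, H.hT2, Multiplier.incl_U, comm_mulT, comm_comm, TensorProduct.comm_tmul]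
    · show σ ((H.comul a).V (σ (lTensor A (LinearMap.mulRight k b) u)))
        = u * σ (H.T2 (σ (a ⊗ₜ b)))
      rw [comm_lTensor]
      have h1 : (H.comul a).V (rTensor A (LinearMap.mulRight k b) (σ u))
          = ((tOne k A A b) * (H.comul a)).V (σ u) := rfl
      rw [h1, H.hT2, Multiplier.incl_V, comm_mulT, comm_comm, TensorProduct.comm_tmul]
  coassoc := by
    intro a b c
    show (TensorProduct.assoc k A A A) _ = _
    have hmapA : ((σ : A ⊗[k] A ≃ₗ[k] A ⊗[k] A) ≪≫ₗ H.T4 ≪≫ₗ σ).toLinearMap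
          ∘ₗ TensorProduct.mk k A A a
        = (σ).toLinearMap ∘ₗ H.T4.toLinearMap ∘ₗ (TensorProduct.mk k A A).flip a := by
      apply LinearMap.ext
      intro u
      simp [LinearEquiv.trans_apply]
    have hmapB : (H.T3 ≪≫ₗ (σ : A ⊗[k] A ≃ₗ[k] A ⊗[k] A)).toLinearMap
          ∘ₗ (TensorProduct.mk k A A).flip c
        = (σ).toLinearMap ∘ₗ H.T3.toLinearMap ∘ₗ (TensorProduct.mk k A A).flip c := by
      apply LinearMap.ext
      intro u
      simp [LinearEquiv.trans_apply]
    have hel1 : (H.T3 ≪≫ₗ (σ : A ⊗[k] A ≃ₗ[k] A ⊗[k] A)) (b ⊗ₜ c) = σ (H.T3 (b ⊗ₜ c)) := rfl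
    have hel2 : ((σ : A ⊗[k] A ≃ₗ[k] A ⊗[k] A) ≪≫ₗ H.T4 ≪≫ₗ σ) (a ⊗ₜ b)
        = σ (H.T4 (b ⊗ₜ a)) := by
      simp [LinearEquiv.trans_apply]
    rw [hmapA, hmapB, hel1, hel2, claimA, claimB, ← MX H]
  counit := H.counit
  counit_mul := H.counit_mul
  hcounit1 := by
    intro a b
    show apF k A H.counit (σ (H.T3 (a ⊗ₜ b))) = a * b
    rw [apF_eq, ← apRf_comm]
    exact ct3 H a b
  hcounit2 := by
    intro a b
    simp only [LinearEquiv.trans_apply, TensorProduct.comm_tmul]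
    rw [apT_eq, apRf_comm, comm_comm]
    exact cf4 H hone b a
  S := H.S.symm
  S_antimul := by
    intro a b
    apply H.S.injective
    rw [LinearEquiv.apply_symm_apply, H.S_antimul, LinearEquiv.apply_symm_apply,
      LinearEquiv.apply_symm_apply]
  hS1 := by
    intro a b
    show LinearMap.mul' k A ((rTensor A H.S.symm.toLinearMap) (σ (H.T3 (a ⊗ₜ b))))
      = H.counit a • b
    apply H.S.injective
    rw [map_smul, SXrT, L3 H]
  hS2 := by
    intro a b
    simp only [LinearEquiv.trans_apply, TensorProduct.comm_tmul]
    apply H.S.injective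
    rw [map_smul, SXlT, L4 H]

end CopPart

section Z1Part

variable {A : Type*} [NonUnitalRing A] [Module k A] [SMulCommClass k A A] [IsScalarTower k A A]
variable (H : MHA k A)

local notation "σ" => TensorProduct.comm k A A

lemma Z1 (hone : ∃ c₁ : A, H.counit c₁ = 1) (b a : A) :
    H.T3 ((lTensor A H.S.symm.toLinearMap) (σ (H.T2 (H.S b ⊗ₜ a)))) = b ⊗ₜ a := by
  have h := Kidentity (cop H hone) a (H.S b)
  have e1 : (cop H hone).T1 = H.T3 ≪≫ₗ σ := rfl
  have e2 : (cop H hone).T4 = ((σ : A ⊗[k] A ≃ₗ[k] A ⊗[k] A) ≪≫ₗ H.T2 ≪≫ₗ σ) := rfl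
  have e3 : (cop H hone).S = H.S.symm := rfl
  rw [e1, e2, e3] at h
  simp only [LinearEquiv.trans_apply, TensorProduct.comm_tmul] at h
  -- h : σ (H.T3 ((lTensor A H.S.symm) (σ (H.T2 (H.S b ⊗ₜ a))))) = a ⊗ₜ H.S.symm (H.S b)
  rw [LinearEquiv.symm_apply_apply] at h
  have h2 := congrArg (σ) h
  rw [comm_comm, TensorProduct.comm_tmul] at h2
  exact h2

end Z1Part

section LocalUnits

variable {A : Type*} [NonUnitalRing A] [Module k A] [SMulCommClass k A A] [IsScalarTower k A A]
variable (H : MHA k A)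

lemma cwm1 (x : A) :
    H.T1.toLinearMap ∘ₗ rTensor A (LinearMap.mulLeft k x) = (H.comul x).U ∘ₗ H.T1.toLinearMap := by
  apply TensorProduct.ext'
  intro p q
  simp only [LinearMap.comp_apply, rTensor_tmul, LinearMap.mulLeft_apply, LinearEquiv.coe_coe]
  exact (cw1 H x p q).symm

lemma cwm1' (y : A) :
    H.T2.toLinearMap ∘ₗ lTensor A (LinearMap.mulRight k y) = (H.comul y).V ∘ₗ H.T2.toLinearMap := by
  apply TensorProduct.ext'
  intro p q
  simp only [LinearMap.comp_apply, lTensor_tmul, LinearMap.mulRight_apply, LinearEquiv.coe_coe]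
  exact (cw1' H y p q).symm

lemma T1_lTensor_comm (w : A) :
    H.T1.toLinearMap ∘ₗ lTensor A (LinearMap.mulRight k w)
      = lTensor A (LinearMap.mulRight k w) ∘ₗ H.T1.toLinearMap := by
  apply TensorProduct.ext'
  intro p q
  simp only [LinearMap.comp_apply, lTensor_tmul, LinearMap.mulRight_apply, LinearEquiv.coe_coe]
  exact (r_f H w p q).symm

lemma T2_rTensor_comm (x : A) :
    H.T2.toLinearMap ∘ₗ rTensor A (LinearMap.mulLeft k x)
      = rTensor A (LinearMap.mulLeft k x) ∘ₗ H.T2.toLinearMap := by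
  apply TensorProduct.ext'
  intro p q
  simp only [LinearMap.comp_apply, rTensor_tmul, LinearMap.mulLeft_apply, LinearEquiv.coe_coe]
  exact (r_g H x p q).symm

lemma T1symm_lTensor_comm (w : A) (z : A ⊗[k] A) :
    H.T1.symm (lTensor A (LinearMap.mulRight k w) z)
      = lTensor A (LinearMap.mulRight k w) (H.T1.symm z) := by
  apply H.T1.injective
  rw [LinearEquiv.apply_symm_apply]
  have := congrArg (fun f => f (H.T1.symm z)) (T1_lTensor_comm H w)
  simp only [LinearMap.comp_apply, LinearEquiv.coe_coe] at this
  rw [this, LinearEquiv.apply_symm_apply]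

lemma T2symm_rTensor_comm (x : A) (z : A ⊗[k] A) :
    H.T2.symm (rTensor A (LinearMap.mulLeft k x) z)
      = rTensor A (LinearMap.mulLeft k x) (H.T2.symm z) := by
  apply H.T2.injective
  rw [LinearEquiv.apply_symm_apply]
  have := congrArg (fun f => f (H.T2.symm z)) (T2_rTensor_comm H x)
  simp only [LinearMap.comp_apply, LinearEquiv.coe_coe] at this
  rw [this, LinearEquiv.apply_symm_apply]

include H in
/-- Every element of a multiplier Hopf algebra has a left unit. -/
lemma left_unit_single (a : A) : ∃ e : A, e * a = a := by
  by_cases hA0 : ∃ c : A, c ≠ 0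
  swap
  · push_neg at hA0
    exact ⟨0, by rw [hA0 a, mul_zero]⟩
  obtain ⟨c, hc⟩ := hA0
  set u := H.T1.symm (c ⊗ₜ a) with hu
  have step : ∀ x : A, rTensor A (LinearMap.mulLeft k x) u
      ∈ LinearMap.range (lTensor A (LinearMap.mulRight k a)) := by
    intro x
    have h1 : H.T1 (rTensor A (LinearMap.mulLeft k x) u) = (H.comul x).U (c ⊗ₜ a) := by
      have := congrArg (fun f => f u) (cwm1 H x)
      simp only [LinearMap.comp_apply, LinearEquiv.coe_coe] at this
      rw [this, hu, LinearEquiv.apply_symm_apply]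
    have h2 : H.T1 (rTensor A (LinearMap.mulLeft k x) u)
        = lTensor A (LinearMap.mulRight k a) (H.T3 (x ⊗ₜ c)) := by
      rw [h1, cw2 H]
    have h3 : rTensor A (LinearMap.mulLeft k x) u
        = lTensor A (LinearMap.mulRight k a) (H.T1.symm (H.T3 (x ⊗ₜ c))) := by
      have := congrArg H.T1.symm h2
      rwa [LinearEquiv.symm_apply_apply, T1symm_lTensor_comm H] at this
    exact ⟨_, h3.symm⟩
  obtain ⟨w, hw⟩ := mem_range_lTensor_of_forall H.nondeg _ u step
  obtain ⟨g, hg⟩ := exists_dual_one (k := k) hc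
  refine ⟨apLf g (H.T1 w), ?_⟩
  have h2 : (c ⊗ₜ[k] a) = lTensor A (LinearMap.mulRight k a) (H.T1 w) := by
    have : H.T1 u = c ⊗ₜ a := by rw [hu, LinearEquiv.apply_symm_apply]
    rw [← this, ← hw]
    have := congrArg (fun f => f w) (T1_lTensor_comm H a)
    simp only [LinearMap.comp_apply, LinearEquiv.coe_coe] at this
    exact this
  have h3 := congrArg (apLf g) h2
  rw [apLf_tmul, hg, one_smul, apLf_lTensor] at h3
  exact h3.symm

include H in
/-- Every element of a multiplier Hopf algebra has a right unit. -/
lemma right_unit_single (a : A) : ∃ e : A, a * e = a := by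
  by_cases hA0 : ∃ c : A, c ≠ 0
  swap
  · push_neg at hA0
    exact ⟨0, by rw [hA0 a, zero_mul]⟩
  obtain ⟨c, hc⟩ := hA0
  set u := H.T2.symm (a ⊗ₜ c) with hu
  have step : ∀ x : A, lTensor A (LinearMap.mulRight k x) u
      ∈ LinearMap.range (rTensor A (LinearMap.mulLeft k a)) := by
    intro x
    have h1 : H.T2 (lTensor A (LinearMap.mulRight k x) u) = (H.comul x).V (a ⊗ₜ c) := by
      have := congrArg (fun f => f u) (cwm1' H x)
      simp only [LinearMap.comp_apply, LinearEquiv.coe_coe] at this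
      rw [this, hu, LinearEquiv.apply_symm_apply]
    have h2 : H.T2 (lTensor A (LinearMap.mulRight k x) u)
        = rTensor A (LinearMap.mulLeft k a) (H.T4 (x ⊗ₜ c)) := by
      rw [h1, cw2' H]
    have h3 : lTensor A (LinearMap.mulRight k x) u
        = rTensor A (LinearMap.mulLeft k a) (H.T2.symm (H.T4 (x ⊗ₜ c))) := by
      have := congrArg H.T2.symm h2
      rwa [LinearEquiv.symm_apply_apply, T2symm_rTensor_comm H] at this
    exact ⟨_, h3.symm⟩
  obtain ⟨w, hw⟩ := mem_range_rTensor_of_forall H.nondeg _ u step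
  obtain ⟨g, hg⟩ := exists_dual_one (k := k) hc
  refine ⟨apRf g (H.T2 w), ?_⟩
  have h2 : (a ⊗ₜ[k] c) = rTensor A (LinearMap.mulLeft k a) (H.T2 w) := by
    have : H.T2 u = a ⊗ₜ c := by rw [hu, LinearEquiv.apply_symm_apply]
    rw [← this, ← hw]
    have := congrArg (fun f => f w) (T2_rTensor_comm H a)
    simp only [LinearMap.comp_apply, LinearEquiv.coe_coe] at this
    exact this
  have h3 := congrArg (apRf g) h2
  rw [apRf_tmul, hg, one_smul, apRf_rTensor] at h3
  exact h3.symm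

include H in
lemma left_unit_list (l : List A) : ∃ e : A, ∀ a ∈ l, e * a = a := by
  induction l with
  | nil => exact ⟨0, by simp⟩
  | cons a l ih =>
    obtain ⟨e₁, he₁⟩ := ih
    obtain ⟨e₂, he₂⟩ := left_unit_single H (a - e₁ * a)
    refine ⟨e₁ + e₂ - e₂ * e₁, ?_⟩
    intro b hb
    rcases List.mem_cons.mp hb with h | h
    · subst h
      rw [mul_sub] at he₂
      rw [sub_mul, add_mul, mul_assoc]
      rw [sub_eq_iff_eq_add] at he₂ ⊢
      rw [he₂]
      abel
    · have h1 := he₁ b h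
      rw [sub_mul, add_mul, mul_assoc, h1]
      abel
  
include H in
lemma right_unit_list (l : List A) : ∃ e : A, ∀ a ∈ l, a * e = a := by
  induction l with
  | nil => exact ⟨0, by simp⟩
  | cons a l ih =>
    obtain ⟨e₁, he₁⟩ := ih
    obtain ⟨e₂, he₂⟩ := right_unit_single H (a - a * e₁)
    refine ⟨e₁ + e₂ - e₁ * e₂, ?_⟩
    intro b hb
    rcases List.mem_cons.mp hb with h | h
    · subst h
      rw [sub_mul] at he₂
      rw [mul_sub, mul_add, ← mul_assoc]
      rw [sub_eq_iff_eq_add] at he₂ ⊢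
      rw [he₂]
      abel
    · have h1 := he₁ b h
      rw [mul_sub, mul_add, ← mul_assoc, h1]
      abel

include H in
/-- Common two-sided local units for a finite set, which are also left units
for a second finite set. -/
lemma unit_for (l₁ l₂ : List A) :
    ∃ b : A, (∀ a ∈ l₁, a * b = a ∧ b * a = a) ∧ (∀ a ∈ l₂, b * a = a) := by
  obtain ⟨e, he⟩ := left_unit_list H (l₁ ++ l₂)
  obtain ⟨f, hf⟩ := right_unit_list H l₁
  refine ⟨e + f - f * e, fun a ha => ⟨?_, ?_⟩, fun a ha => ?_⟩
  · have h1 : a * f = a := hf a ha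
    rw [mul_sub, mul_add, ← mul_assoc, h1]
    have h2 : a * e = a * e := rfl
    abel
  · have h1 : e * a = a := he a (List.mem_append_left _ ha)
    rw [sub_mul, add_mul, mul_assoc, h1]
    abel
  · have h1 : e * a = a := he a (List.mem_append_right _ ha)
    rw [sub_mul, add_mul, mul_assoc, h1]
    abel

end LocalUnits

section PsumPart

variable {M N P : Type*} [AddCommGroup M] [Module k M] [AddCommGroup N] [Module k N]
  [AddCommGroup P] [Module k P]

lemma sum_map_G (G : M ⊗[k] N →ₗ[k] P) (l : List (M × N)) :
    (l.map fun p => G (p.1 ⊗ₜ p.2)).sum = G (psum k l) := by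
  induction l with
  | nil => simp [psum]
  | cons p l ih =>
    simp only [psum, List.map_cons, List.sum_cons, map_add] at *
    rw [ih]

lemma exists_psum (u : M ⊗[k] N) : ∃ l : List (M × N), psum k l = u := by
  induction u with
  | zero => exact ⟨[], rfl⟩
  | tmul m n => exact ⟨[(m, n)], by simp [psum]⟩
  | add u v hu hv =>
    obtain ⟨lu, hlu⟩ := hu
    obtain ⟨lv, hlv⟩ := hv
    exact ⟨lu ++ lv, by simp [psum, List.sum_append, ← hlu, ← hlv]⟩

end PsumPart

section RSide

variable {A : Type*} [NonUnitalRing A] [Module k A] [SMulCommClass k A A] [IsScalarTower k A A]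
variable {R : Type*} [NonUnitalRing R] [Module k R] [SMulCommClass k R R] [IsScalarTower k R R]
variable (H : MHA k A) (act : A →ₗ[k] R →ₗ[k] R)

lemma flip_act (h : IsModAlg H R act) (b : A) (x : R) :
    act.flip (act b x) = (act.flip x) ∘ₗ LinearMap.mulRight k b := by
  apply LinearMap.ext
  intro p
  simp only [LinearMap.flip_apply, LinearMap.comp_apply, LinearMap.mulRight_apply]
  exact h.assoc p b x

lemma mc_map (h : IsModAlg H R act) (a b : A) (x y : R) :
    act a (x * act b y)
      = (LinearMap.mul' k R ∘ₗ TensorProduct.map (act.flip x) (act.flip y)) (H.T1 (a ⊗ₜ b)) := by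
  obtain ⟨l, hl⟩ := exists_psum (k := k) (H.T1 (a ⊗ₜ b))
  have hfn : (fun p : A × A => act p.1 x * act p.2 y)
      = fun p : A × A => (LinearMap.mul' k R ∘ₗ TensorProduct.map (act.flip x) (act.flip y))
          (p.1 ⊗ₜ p.2) := by
    funext p
    simp
  rw [h.mul_cond a b x y l hl, hfn, sum_map_G, hl]

lemma t3_map (h : IsModAlg H R act) (a b : A) (x y : R) :
    act a (act b x * y)
      = (LinearMap.mul' k R ∘ₗ TensorProduct.map (act.flip x) (act.flip y)) (H.T3 (a ⊗ₜ b)) := by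
  have hy : y ∈ Submodule.span k {z : R | ∃ (c : A) (w : R), z = act c w} := by
    rw [h.unital]
    trivial
  induction hy using Submodule.span_induction with
  | mem z hz =>
    obtain ⟨c, w, rfl⟩ := hz
    rw [mc_map H act h a c (act b x) w]
    have h1 : TensorProduct.map (act.flip (act b x)) (act.flip w)
        = TensorProduct.map (act.flip x) (act.flip w) ∘ₗ rTensor A (LinearMap.mulRight k b) := by
      apply TensorProduct.ext'
      intro p q
      simp [h.assoc]
    have h2 : TensorProduct.map (act.flip x) (act.flip w) ∘ₗ lTensor A (LinearMap.mulRight k c)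
        = TensorProduct.map (act.flip x) (act.flip (act c w)) := by
      apply TensorProduct.ext'
      intro p q
      simp [h.assoc]
    simp only [LinearMap.comp_apply]
    rw [h1]
    simp only [LinearMap.comp_apply]
    rw [r_j H a b c, ← LinearMap.comp_apply (TensorProduct.map _ _), h2]
  | zero => simp
  | add y₁ y₂ _ _ hy₁ hy₂ =>
    have hadd : act.flip (y₁ + y₂) = act.flip y₁ + act.flip y₂ := map_add _ _ _
    simp only [LinearMap.comp_apply] at *
    rw [mul_add, map_add, hy₁, hy₂, hadd, map_add_right, LinearMap.add_apply, map_add]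
  | smul c y₁ _ hy₁ =>
    have hsmul : act.flip (c • y₁) = c • act.flip y₁ := map_smul _ _ _
    simp only [LinearMap.comp_apply] at *
    rw [mul_smul_comm, map_smul, hy₁, hsmul, map_smul_right, LinearMap.smul_apply, map_smul]

lemma act_smul_list (c : k) (l : List (A × R)) :
    c • (l.map fun p => act p.1 p.2).sum
      = ((l.map fun p => (p.1, c • p.2)).map fun p => act p.1 p.2).sum := by
  induction l with
  | nil => simp
  | cons p l ih =>
    simp only [List.map_cons, List.sum_cons, smul_add, map_smul]
    rw [ih]

/-- Representation of a module element as a finite sum of actions. -/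
lemma repr_act (h : IsModAlg H R act) (r : R) :
    ∃ lc : List (A × R), r = (lc.map fun p => act p.1 p.2).sum := by
  have hr : r ∈ Submodule.span k {z : R | ∃ (a : A) (x : R), z = act a x} := by
    rw [h.unital]
    trivial
  induction hr using Submodule.span_induction with
  | mem z hz =>
    obtain ⟨a, x, rfl⟩ := hz
    exact ⟨[(a, x)], by simp⟩
  | zero => exact ⟨[], by simp⟩
  | add x y _ _ hx hy =>
    obtain ⟨lx, hlx⟩ := hx
    obtain ⟨ly, hly⟩ := hy
    exact ⟨lx ++ ly, by rw [List.map_append, List.sum_append, ← hlx, ← hly]⟩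
  | smul c x _ hx =>
    obtain ⟨lx, hlx⟩ := hx
    refine ⟨lx.map fun p => (p.1, c • p.2), ?_⟩
    rw [hlx]
    exact act_smul_list act c lx

/-- Local units simultaneously for `A` and for a unitary module. -/
lemma mod_unit (h : IsModAlg H R act) (la : List A) (lr : List R) :
    ∃ b : A, (∀ a ∈ la, a * b = a ∧ b * a = a) ∧ ∀ r ∈ lr, act b r = r := by
  have haux : ∃ l₂ : List A, ∀ r ∈ lr, ∀ b : A, (∀ a ∈ l₂, b * a = a) → act b r = r := by
    induction lr with
    | nil => exact ⟨[], by simp⟩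
    | cons r lr ih =>
      obtain ⟨l₂, hl₂⟩ := ih
      obtain ⟨lc, hlc⟩ := repr_act H act h r
      refine ⟨(lc.map Prod.fst) ++ l₂, ?_⟩
      intro r' hr' b hb
      rcases List.mem_cons.mp hr' with hh | hh
      · subst hh
        rw [hlc, map_list_sum (act b), List.map_map]
        congr 1
        apply List.map_congr_left
        intro p hp
        simp only [Function.comp_apply]
        rw [h.assoc, hb p.1 (List.mem_append_left _ (List.mem_map_of_mem hp))]
      · exact hl₂ r' hh b fun a ha => hb a (List.mem_append_right _ ha)
  obtain ⟨l₂, hl₂⟩ := haux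
  obtain ⟨b, hb1, hb2⟩ := unit_for H la l₂
  exact ⟨b, hb1, fun r hr => hl₂ r hr b hb2⟩

end RSide

end IPA

end IPAHelpers

open IPA
section Statements
variable {k}
variable {A : Type*} [NonUnitalRing A] [Module k A] [SMulCommClass k A A] [IsScalarTower k A A]
variable {R : Type*} [NonUnitalRing R] [Module k R] [SMulCommClass k R R] [IsScalarTower k R R]

/-- The induced partial action `a · x := 1_L (a ▷ x)` on a right ideal `L` with
identity element `e = 1_L`. -/
def inducedAct (act : A →ₗ[k] R →ₗ[k] R) (L : NonUnitalSubalgebra k R)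
    (hIdeal : ∀ x ∈ L, ∀ r : R, x * r ∈ L) (e : R) (he : e ∈ L) :
    A →ₗ[k] ↥L →ₗ[k] ↥L :=
  LinearMap.mk₂ k (fun a x => (⟨e * act a (x : R), hIdeal e he _⟩ : ↥L))
    (fun a b x => Subtype.ext <| by simp [mul_add])
    (fun c a x => Subtype.ext <| by simp [mul_smul_comm])
    (fun a x y => Subtype.ext <| by simp [mul_add])
    (fun c a x => Subtype.ext <| by simp [mul_smul_comm])

/-- **Proposition 4.10 (Induced partial actions).**  Let `A` be a regular multiplier
Hopf algebra, `R` a unitary left `A`-module algebra via `▷`, and `L ⊆ R` a right ideal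
of `R` with identity element `1_L = e`.  Then `(L, ·, 𝔢)` is a partial `A`-module
algebra, where `a · x = 1_L(a ▷ x)` and `𝔢(a) = a · 1_L`; if `L` is a two-sided ideal,
the induced partial action is symmetric. -/
theorem induced_partial_action
    (H : MHA k A) (hR : NondegProd R)
    (act : A →ₗ[k] R →ₗ[k] R) (h : IsModAlg H R act)
    (L : NonUnitalSubalgebra k R) (hL : NondegProd ↥L)
    (hIdeal : ∀ x ∈ L, ∀ r : R, x * r ∈ L)
    (e : R) (he : e ∈ L) (hidem : ∀ x ∈ L, e * x = x ∧ x * e = x) :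
    IsPModAlg H ↥L (inducedAct act L hIdeal e he)
        (Multiplier.inclL ∘ₗ ((inducedAct act L hIdeal e he).flip ⟨e, he⟩))
    ∧ ((∀ x ∈ L, ∀ r : R, r * x ∈ L) →
        IsSymPModAlg H ↥L (inducedAct act L hIdeal e he)
          (Multiplier.inclL ∘ₗ ((inducedAct act L hIdeal e he).flip ⟨e, he⟩))) := by
  classical
  set A' := inducedAct act L hIdeal e he with hA'def
  have coe_act' : ∀ (a : A) (x : ↥L), ((A' a x : ↥L) : R) = e * act a (x : R) := fun _ _ => rfl
  have coe_list_sum : ∀ (l : List ↥L), ((l.sum : ↥L) : R) = (l.map (Subtype.val : ↥L → R)).sum := by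
    intro l
    induction l with
    | nil => simp
    | cons a l ih => simp [ih]
  by_cases hone : ∃ c₁ : A, H.counit c₁ = 1
  case neg =>
    have hA0 : ∀ a : A, a = 0 := by
      by_contra hcon
      push_neg at hcon
      obtain ⟨a, ha⟩ := hcon
      exact hone (IPA.exists_counit_one H ⟨a, ha⟩)
    have hR0 : ∀ r : R, r = 0 := by
      intro r
      have hr : r ∈ Submodule.span k {z : R | ∃ (a : A) (x : R), z = act a x} := by
        rw [h.unital]
        trivial
      induction hr using Submodule.span_induction with
      | mem z hz =>
        obtain ⟨a, x, rfl⟩ := hz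
        rw [hA0 a, map_zero, LinearMap.zero_apply]
      | zero => rfl
      | add x y _ _ hx hy => rw [hx, hy, add_zero]
      | smul c x _ hx => rw [hx, smul_zero]
    have hL0 : ∀ x y : ↥L, x = y := fun x y => Subtype.ext (by rw [hR0 (x : R), hR0 (y : R)])
    have pm : IsPModAlg H ↥L A' (Multiplier.inclL ∘ₗ (A'.flip ⟨e, he⟩)) := by
      refine ⟨fun _ _ _ _ _ _ => hL0 _ _, fun _ _ _ _ _ => hL0 _ _, ?_, ?_, fun x _ => hL0 x 0⟩
      · intro a x
        rw [hL0 (((Multiplier.inclL ∘ₗ (A'.flip ⟨e, he⟩)) a).U x) 0]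
        exact Submodule.zero_mem _
      · intro la lx
        refine ⟨0, fun a _ => ?_, fun _ _ _ _ => hL0 _ _⟩
        rw [hA0 a]
        simp
    refine ⟨pm, fun _ => ⟨pm, fun _ _ _ _ _ _ => hL0 _ _, fun _ _ _ _ _ => hL0 _ _, ?_⟩⟩
    intro a x
    rw [hL0 (((Multiplier.inclL ∘ₗ (A'.flip ⟨e, he⟩)) a).V x) 0]
    exact Submodule.zero_mem _
  case pos =>
  have he1 : ∀ x, x ∈ L → e * x = x := fun x hx => (hidem x hx).1
  have he2 : ∀ x, x ∈ L → x * e = x := fun x hx => (hidem x hx).2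
  have habs : ∀ (p q : A) (xr yr : R),
      (e * act p xr) * (e * act q yr) = e * (act p xr * act q yr) := by
    intro p q xr yr
    have hmem : e * act p xr ∈ L := hIdeal e he _
    rw [← mul_assoc, he2 _ hmem, mul_assoc]
  have cond1 : ∀ (a b : A) (x y : ↥L) (l : List (A × A)), psum k l = H.T1 (a ⊗ₜ b) →
      A' a (x * A' b y) = (l.map fun p => A' p.1 x * A' p.2 y).sum := by
    intro a b x y l hl
    apply Subtype.ext
    have hRHS : (((l.map fun p => A' p.1 x * A' p.2 y).sum : ↥L) : R)
        = (LinearMap.mulLeft k e ∘ₗ LinearMap.mul' k R ∘ₗ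
            TensorProduct.map (act.flip (x : R)) (act.flip (y : R))) (psum k l) := by
      rw [coe_list_sum, List.map_map, ← IPA.sum_map_G]
      congr 1
      apply List.map_congr_left
      intro p _
      simp only [Function.comp_apply, MulMemClass.coe_mul, LinearMap.comp_apply,
        TensorProduct.map_tmul, LinearMap.mul'_apply, LinearMap.flip_apply,
        LinearMap.mulLeft_apply]
      rw [coe_act', coe_act']
      exact habs p.1 p.2 _ _
    rw [hRHS, hl, coe_act']
    have hx1 : ((x * A' b y : ↥L) : R) = (x : R) * act b (y : R) := by
      rw [MulMemClass.coe_mul, coe_act', ← mul_assoc, he2 _ x.2]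
    rw [hx1, IPA.mc_map H act h a b (x : R) (y : R)]
    simp only [LinearMap.comp_apply, LinearMap.mulLeft_apply]
  have cond2a : ∀ (a b : A) (x : ↥L) (l : List (A × A)),
      psum k l = H.T4 (a ⊗ₜ H.S.symm b) →
      ((Multiplier.inclL ∘ₗ (A'.flip ⟨e, he⟩)) a).U (A' b x)
        = (l.map fun p => A' p.1 (A' (H.S p.2) x)).sum := by
    intro a b x l hl
    apply Subtype.ext
    have claim1 : ∀ p q : A, e * act p (e * act q (x : R))
        = (LinearMap.mulLeft k e ∘ₗ LinearMap.mul' k R ∘ₗ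
            TensorProduct.map (act.flip e) (act.flip (x : R))) (H.T1 (p ⊗ₜ q)) := by
      intro p q
      rw [IPA.mc_map H act h p q e (x : R)]
      simp only [LinearMap.comp_apply, LinearMap.mulLeft_apply]
    have hLHS : ((((Multiplier.inclL ∘ₗ (A'.flip ⟨e, he⟩)) a).U (A' b x) : ↥L) : R)
        = (LinearMap.mulLeft k e ∘ₗ LinearMap.mul' k R ∘ₗ
            TensorProduct.map (act.flip e) (act.flip (x : R))) (a ⊗ₜ b) := by
      simp only [LinearMap.comp_apply, Multiplier.inclL_apply, Multiplier.incl_U,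
        LinearMap.flip_apply, TensorProduct.map_tmul, LinearMap.mul'_apply,
        LinearMap.mulLeft_apply]
      rw [MulMemClass.coe_mul, coe_act', coe_act']
      exact habs a b e (x : R)
    have hRHS : (((l.map fun p => A' p.1 (A' (H.S p.2) x)).sum : ↥L) : R)
        = ((LinearMap.mulLeft k e ∘ₗ LinearMap.mul' k R ∘ₗ
              TensorProduct.map (act.flip e) (act.flip (x : R)))
            ∘ₗ H.T1.toLinearMap ∘ₗ lTensor A H.S.toLinearMap) (psum k l) := by
      rw [coe_list_sum, List.map_map, ← IPA.sum_map_G]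
      congr 1
      apply List.map_congr_left
      intro p _
      simp only [Function.comp_apply, LinearMap.comp_apply, lTensor_tmul, LinearEquiv.coe_coe]
      rw [coe_act', coe_act']
      exact claim1 p.1 (H.S p.2)
    rw [hLHS, hRHS, hl]
    simp only [LinearMap.comp_apply, LinearEquiv.coe_coe]
    rw [IPA.Kidentity H a (H.S.symm b), LinearEquiv.apply_symm_apply]
  have modunit : ∀ (z : ↥L), ∃ b : A, A' b z = z := by
    intro z
    obtain ⟨b, _, hb⟩ := IPA.mod_unit H act h [] [(z : R)]
    refine ⟨b, Subtype.ext ?_⟩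
    rw [coe_act', hb (z : R) (by simp), he1 _ z.2]
  have cond2b : ∀ (a : A) (x : ↥L),
      ((Multiplier.inclL ∘ₗ (A'.flip ⟨e, he⟩)) a).U x
        ∈ Submodule.span k {z : ↥L | ∃ (b : A) (y : ↥L), z = A' b y} := by
    intro a x
    obtain ⟨b, hb⟩ := modunit (((Multiplier.inclL ∘ₗ (A'.flip ⟨e, he⟩)) a).U x)
    exact Submodule.subset_span ⟨b, _, hb.symm⟩
  have cond3 : ∀ (la : List A) (lx : List ↥L), ∃ b : A,
      (∀ a ∈ la, a * b = a ∧ b * a = a) ∧ ∀ a ∈ la, ∀ x ∈ lx, A' a x = A' a (A' b x) := by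
    intro la lx
    obtain ⟨b, hb1, hb2⟩ := IPA.mod_unit H act h la (lx.map (Subtype.val : ↥L → R))
    refine ⟨b, hb1, ?_⟩
    intro a _ x hx
    have hbx : A' b x = x := by
      apply Subtype.ext
      rw [coe_act', hb2 (x : R) (List.mem_map_of_mem (f := Subtype.val) hx), he1 _ x.2]
    rw [hbx]
  have cond4 : ∀ x : ↥L, (∀ a : A, A' a x = 0) → x = 0 := by
    intro x hx
    obtain ⟨b, hb⟩ := modunit x
    rw [← hb, hx b]
  refine ⟨⟨cond1, cond2a, cond2b, cond3, cond4⟩, ?_⟩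
  intro htwo
  have hcent : ∀ r : R, e * r = r * e := by
    intro r
    calc e * r = (e * r) * e := (he2 _ (hIdeal e he r)).symm
      _ = e * (r * e) := mul_assoc _ _ _
      _ = r * e := he1 _ (htwo e he r)
  have cond5 : ∀ (a b : A) (x y : ↥L) (l : List (A × A)), psum k l = H.T3 (a ⊗ₜ b) →
      A' a (A' b x * y) = (l.map fun p => A' p.1 x * A' p.2 y).sum := by
    intro a b x y l hl
    apply Subtype.ext
    have hRHS : (((l.map fun p => A' p.1 x * A' p.2 y).sum : ↥L) : R)
        = (LinearMap.mulLeft k e ∘ₗ LinearMap.mul' k R ∘ₗ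
            TensorProduct.map (act.flip (x : R)) (act.flip (y : R))) (psum k l) := by
      rw [coe_list_sum, List.map_map, ← IPA.sum_map_G]
      congr 1
      apply List.map_congr_left
      intro p _
      simp only [Function.comp_apply, MulMemClass.coe_mul, LinearMap.comp_apply,
        TensorProduct.map_tmul, LinearMap.mul'_apply, LinearMap.flip_apply,
        LinearMap.mulLeft_apply]
      rw [coe_act', coe_act']
      exact habs p.1 p.2 _ _
    rw [hRHS, hl, coe_act']
    have hx1 : ((A' b x * y : ↥L) : R) = act b (x : R) * (y : R) := by
      rw [MulMemClass.coe_mul, coe_act', hcent (act b (x : R)), mul_assoc, he1 _ y.2]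
    rw [hx1, IPA.t3_map H act h a b (x : R) (y : R)]
    simp only [LinearMap.comp_apply, LinearMap.mulLeft_apply]
  have cond6 : ∀ (a b : A) (x : ↥L) (l : List (A × A)),
      psum k l = H.T2 (H.S b ⊗ₜ a) →
      ((Multiplier.inclL ∘ₗ (A'.flip ⟨e, he⟩)) a).V (A' b x)
        = (l.map fun p => A' p.2 (A' (H.S.symm p.1) x)).sum := by
    intro a b x l hl
    apply Subtype.ext
    set G : A ⊗[k] A →ₗ[k] R := LinearMap.mulLeft k e ∘ₗ LinearMap.mul' k R ∘ₗ
        TensorProduct.map (act.flip e) (act.flip (x : R)) with hGdef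
    set Gh : A ⊗[k] A →ₗ[k] R := LinearMap.mulLeft k e ∘ₗ LinearMap.mul' k R ∘ₗ
        TensorProduct.map (act.flip (x : R)) (act.flip e) with hGhdef
    have claim1 : ∀ p q : A, e * act p (e * act q (x : R)) = G (H.T1 (p ⊗ₜ q)) := by
      intro p q
      rw [IPA.mc_map H act h p q e (x : R), hGdef]
      simp only [LinearMap.comp_apply, LinearMap.mulLeft_apply]
    have claim2 : G ∘ₗ H.T1.toLinearMap = Gh ∘ₗ H.T3.toLinearMap := by
      apply TensorProduct.ext'
      intro u w
      simp only [LinearMap.comp_apply, LinearEquiv.coe_coe]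
      rw [← claim1 u w, hcent (act w (x : R)), IPA.t3_map H act h u w (x : R) e, hGhdef]
      simp only [LinearMap.comp_apply, LinearMap.mulLeft_apply]
    have hLHS : ((((Multiplier.inclL ∘ₗ (A'.flip ⟨e, he⟩)) a).V (A' b x) : ↥L) : R)
        = Gh (b ⊗ₜ a) := by
      simp only [LinearMap.comp_apply, Multiplier.inclL_apply, Multiplier.incl_V,
        LinearMap.flip_apply, hGhdef, TensorProduct.map_tmul, LinearMap.mul'_apply,
        LinearMap.mulLeft_apply]
      rw [MulMemClass.coe_mul, coe_act', coe_act']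
      exact habs b a (x : R) e
    have hRHS : (((l.map fun p => A' p.2 (A' (H.S.symm p.1) x)).sum : ↥L) : R)
        = (G ∘ₗ H.T1.toLinearMap ∘ₗ lTensor A H.S.symm.toLinearMap
            ∘ₗ (TensorProduct.comm k A A).toLinearMap) (psum k l) := by
      rw [coe_list_sum, List.map_map, ← IPA.sum_map_G]
      congr 1
      apply List.map_congr_left
      intro p _
      simp only [Function.comp_apply, LinearMap.comp_apply, lTensor_tmul, LinearEquiv.coe_coe,
        TensorProduct.comm_tmul]
      rw [coe_act', coe_act']
      exact claim1 p.2 (H.S.symm p.1)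
    rw [hLHS, hRHS, hl]
    simp only [LinearMap.comp_apply, LinearEquiv.coe_coe]
    have hc2 := congrArg (fun f => f ((lTensor A H.S.symm.toLinearMap)
        ((TensorProduct.comm k A A) (H.T2 (H.S b ⊗ₜ a))))) claim2
    simp only [LinearMap.comp_apply, LinearEquiv.coe_coe] at hc2
    rw [hc2, IPA.Z1 H hone b a]
  have cond7 : ∀ (a : A) (x : ↥L),
      ((Multiplier.inclL ∘ₗ (A'.flip ⟨e, he⟩)) a).V x
        ∈ Submodule.span k {z : ↥L | ∃ (b : A) (y : ↥L), z = A' b y} := by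
    intro a x
    obtain ⟨b, hb⟩ := modunit (((Multiplier.inclL ∘ₗ (A'.flip ⟨e, he⟩)) a).V x)
    exact Submodule.subset_span ⟨b, _, hb.symm⟩
  exact ⟨⟨cond1, cond2a, cond2b, cond3, cond4⟩, cond5, cond6, cond7⟩

end Statements
end
end

section
/- Let (R, ·, 𝔢) be a symmetric partial A-module algebra over a regular multiplier Hopf algebra A. Then for all a,b ∈ A and x,y ∈ R: (i) (a·x)(b·y) = a₍₁₎·(x(S(a₍₂₎)b·y)); (ii) (a·x)(b·y) = b₍₂₎·((S⁻¹(b₍₁₎)a·x)y). -/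
/- ## Preliminaries: multiplier algebras and (regular) multiplier Hopf algebras -/

open scoped TensorProduct
open TensorProduct LinearMap
set_option linter.unusedSectionVars false

noncomputable section

variable (k : Type*) [Field k]

section Statements
variable {k}
variable {A : Type*} [NonUnitalRing A] [Module k A] [SMulCommClass k A A] [IsScalarTower k A A]
variable {R : Type*} [NonUnitalRing R] [Module k R] [SMulCommClass k R R] [IsScalarTower k R R]

section AuxSep

variable {k : Type*} [Field k]
variable {A : Type*} [NonUnitalRing A] [Module k A] [SMulCommClass k A A] [IsScalarTower k A A]

/-- Separation in the second factor: if all contractions of the first factor of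
`w : M ⊗ A` with linear functionals vanish, then `w = 0`. -/
lemma aux_sep_right {M : Type*} [AddCommGroup M] [Module k M] (w : M ⊗[k] A)
    (h : ∀ g : M →ₗ[k] k, (TensorProduct.lid k A) (rTensor A g w) = 0) : w = 0 := by
  classical
  set bM := Module.Basis.ofVectorSpace k M
  set bA := Module.Basis.ofVectorSpace k A
  have key : ∀ (u : M ⊗[k] A) (β) (γ),
      (bM.tensorProduct bA).repr u (β, γ)
        = bA.repr ((TensorProduct.lid k A) (rTensor A (bM.coord β) u)) γ := by
    intro u β γ
    induction u with
    | zero => simp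
    | tmul m a =>
      simp [Module.Basis.tensorProduct_repr_tmul_apply, Module.Basis.coord_apply, TensorProduct.lid_tmul,
        smul_eq_mul, mul_comm]
    | add u v hu hv => simp [map_add, hu, hv]
  refine (bM.tensorProduct bA).ext_elem fun i => ?_
  obtain ⟨β, γ⟩ := i
  rw [key w β γ, h (bM.coord β)]
  simp

/-- Separation in the first factor. -/
lemma aux_sep_left {M : Type*} [AddCommGroup M] [Module k M] (w : A ⊗[k] M)
    (h : ∀ g : M →ₗ[k] k, (TensorProduct.rid k A) (lTensor A g w) = 0) : w = 0 := by
  classical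
  set bM := Module.Basis.ofVectorSpace k M
  set bA := Module.Basis.ofVectorSpace k A
  have key : ∀ (u : A ⊗[k] M) (β) (γ),
      (bA.tensorProduct bM).repr u (β, γ)
        = bA.repr ((TensorProduct.rid k A) (lTensor A (bM.coord γ) u)) β := by
    intro u β γ
    induction u with
    | zero => simp
    | tmul a m =>
      simp [Module.Basis.tensorProduct_repr_tmul_apply, Module.Basis.coord_apply, TensorProduct.rid_tmul,
        smul_eq_mul, mul_comm]
    | add u v hu hv => simp [map_add, hu, hv]
  refine (bA.tensorProduct bM).ext_elem fun i => ?_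
  obtain ⟨β, γ⟩ := i
  rw [key w β γ, h (bM.coord γ)]
  simp

lemma aux_stripR_snd {M : Type*} [AddCommGroup M] [Module k M] (hnd : NondegProd A)
    (w : M ⊗[k] A) (h : ∀ d : A, lTensor M (LinearMap.mulRight k d) w = 0) : w = 0 := by
  refine aux_sep_right w fun g => ?_
  refine hnd.1 _ fun d => ?_
  have comm : ∀ u : M ⊗[k] A,
      (TensorProduct.lid k A) (rTensor A g u) * d
        = (TensorProduct.lid k A) (rTensor A g (lTensor M (LinearMap.mulRight k d) u)) := by
    intro u
    induction u with
    | zero => simp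
    | tmul m a => simp [smul_mul_assoc]
    | add u v hu hv => simp [add_mul, hu, hv]
  rw [comm w, h d]
  simp

lemma aux_stripR_fst {M : Type*} [AddCommGroup M] [Module k M] (hnd : NondegProd A)
    (w : A ⊗[k] M) (h : ∀ d : A, rTensor M (LinearMap.mulRight k d) w = 0) : w = 0 := by
  refine aux_sep_left w fun g => ?_
  refine hnd.1 _ fun d => ?_
  have comm : ∀ u : A ⊗[k] M,
      (TensorProduct.rid k A) (lTensor A g u) * d
        = (TensorProduct.rid k A) (lTensor A g (rTensor M (LinearMap.mulRight k d) u)) := by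
    intro u
    induction u with
    | zero => simp
    | tmul a m => simp [smul_mul_assoc]
    | add u v hu hv => simp [add_mul, hu, hv]
  rw [comm w, h d]
  simp

lemma aux_stripL_snd {M : Type*} [AddCommGroup M] [Module k M] (hnd : NondegProd A)
    (w : M ⊗[k] A) (h : ∀ x : A, lTensor M (LinearMap.mulLeft k x) w = 0) : w = 0 := by
  refine aux_sep_right w fun g => ?_
  refine hnd.2 _ fun x => ?_
  have comm : ∀ u : M ⊗[k] A,
      x * (TensorProduct.lid k A) (rTensor A g u)
        = (TensorProduct.lid k A) (rTensor A g (lTensor M (LinearMap.mulLeft k x) u)) := by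
    intro u
    induction u with
    | zero => simp
    | tmul m a => simp [mul_smul_comm]
    | add u v hu hv => simp [mul_add, hu, hv]
  rw [comm w, h x]
  simp

lemma aux_stripL_fst {M : Type*} [AddCommGroup M] [Module k M] (hnd : NondegProd A)
    (w : A ⊗[k] M) (h : ∀ x : A, rTensor M (LinearMap.mulLeft k x) w = 0) : w = 0 := by
  refine aux_sep_left w fun g => ?_
  refine hnd.2 _ fun x => ?_
  have comm : ∀ u : A ⊗[k] M,
      x * (TensorProduct.rid k A) (lTensor A g u)
        = (TensorProduct.rid k A) (lTensor A g (rTensor M (LinearMap.mulLeft k x) u)) := by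
    intro u
    induction u with
    | zero => simp
    | tmul a m => simp [mul_smul_comm]
    | add u v hu hv => simp [mul_add, hu, hv]
  rw [comm w, h x]
  simp

end AuxSep

section AuxMult

variable {k : Type*} [Field k]
variable {A : Type*} [NonUnitalRing A] [Module k A] [SMulCommClass k A A] [IsScalarTower k A A]

lemma aux_mul_tmul (u : A ⊗[k] A) (b c : A) :
    u * (b ⊗ₜ[k] c)
      = lTensor A (LinearMap.mulRight k c) (rTensor A (LinearMap.mulRight k b) u) := by
  induction u with
  | zero => simp
  | tmul p q => simp [Algebra.TensorProduct.tmul_mul_tmul]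
  | add u v hu hv => simp [add_mul, hu, hv]

lemma aux_tmul_mul (u : A ⊗[k] A) (b c : A) :
    (b ⊗ₜ[k] c) * u
      = lTensor A (LinearMap.mulLeft k c) (rTensor A (LinearMap.mulLeft k b) u) := by
  induction u with
  | zero => simp
  | tmul p q => simp [Algebra.TensorProduct.tmul_mul_tmul]
  | add u v hu hv => simp [mul_add, hu, hv]

lemma aux_incl_injective (hnd : NondegProd A) :
    Function.Injective (Multiplier.incl (k := k) (A := A ⊗[k] A)) := by
  intro u v huv
  have h : ∀ w : A ⊗[k] A, (u - v) * w = 0 := by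
    intro w
    have h2 := congrArg (fun m => Multiplier.U m w) huv
    simp only [Multiplier.incl_U] at h2
    rw [sub_mul, h2, sub_self]
  have h2 : ∀ b : A, rTensor A (LinearMap.mulRight k b) (u - v) = 0 := by
    intro b
    refine aux_stripR_snd hnd _ fun d => ?_
    rw [← aux_mul_tmul]
    exact h _
  have h3 := aux_stripR_fst hnd (u - v) h2
  exact sub_eq_zero.mp h3

lemma aux_incl_mul_incl (u v : A ⊗[k] A) :
    Multiplier.incl (k := k) u * Multiplier.incl v = Multiplier.incl (u * v) := by
  apply Multiplier.ext <;> refine LinearMap.ext fun w => ?_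
  · show u * (v * w) = (u * v) * w
    rw [mul_assoc]
  · show (w * u) * v = w * (u * v)
    rw [mul_assoc]

lemma aux_oneT_mul_incl (c : A) (u : A ⊗[k] A) :
    oneT k A A c * Multiplier.incl u
      = Multiplier.incl (lTensor A (LinearMap.mulLeft k c) u) := by
  apply Multiplier.ext <;> refine LinearMap.ext fun w => ?_
  · exact (oneT k A A c).U_mul u w
  · exact (oneT k A A c).compat w u

lemma aux_incl_mul_oneT (u : A ⊗[k] A) (c : A) :
    Multiplier.incl u * oneT k A A c
      = Multiplier.incl (lTensor A (LinearMap.mulRight k c) u) := by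
  apply Multiplier.ext <;> refine LinearMap.ext fun w => ?_
  · exact ((oneT k A A c).compat u w).symm
  · exact (oneT k A A c).V_mul w u

lemma aux_tOne_mul_incl (x : A) (u : A ⊗[k] A) :
    tOne k A A x * Multiplier.incl u
      = Multiplier.incl (rTensor A (LinearMap.mulLeft k x) u) := by
  apply Multiplier.ext <;> refine LinearMap.ext fun w => ?_
  · exact (tOne k A A x).U_mul u w
  · exact (tOne k A A x).compat w u

lemma aux_incl_mul_tOne (u : A ⊗[k] A) (x : A) :
    Multiplier.incl u * tOne k A A x
      = Multiplier.incl (rTensor A (LinearMap.mulRight k x) u) := by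
  apply Multiplier.ext <;> refine LinearMap.ext fun w => ?_
  · exact ((tOne k A A x).compat u w).symm
  · exact (tOne k A A x).V_mul w u

lemma aux_oneT_oneT (c d : A) :
    oneT k A A c * oneT k A A d = oneT k A A (c * d) := by
  apply Multiplier.ext <;> refine LinearMap.ext fun w => ?_
  · show lTensor A (LinearMap.mulLeft k c) (lTensor A (LinearMap.mulLeft k d) w)
      = lTensor A (LinearMap.mulLeft k (c * d)) w
    rw [← LinearMap.lTensor_comp_apply, ← LinearMap.mulLeft_mul]
  · show lTensor A (LinearMap.mulRight k d) (lTensor A (LinearMap.mulRight k c) w)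
      = lTensor A (LinearMap.mulRight k (c * d)) w
    rw [← LinearMap.lTensor_comp_apply, ← LinearMap.mulRight_mul]

lemma aux_tOne_comm_oneT (x c : A) :
    tOne k A A x * oneT k A A c = oneT k A A c * tOne k A A x := by
  apply Multiplier.ext <;> refine LinearMap.ext fun w => ?_
  · show rTensor A (LinearMap.mulLeft k x) (lTensor A (LinearMap.mulLeft k c) w)
      = lTensor A (LinearMap.mulLeft k c) (rTensor A (LinearMap.mulLeft k x) w)
    rw [← LinearMap.comp_apply, ← LinearMap.comp_apply, LinearMap.rTensor_comp_lTensor,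
      LinearMap.lTensor_comp_rTensor]
  · show lTensor A (LinearMap.mulRight k c) (rTensor A (LinearMap.mulRight k x) w)
      = rTensor A (LinearMap.mulRight k x) (lTensor A (LinearMap.mulRight k c) w)
    rw [← LinearMap.comp_apply, ← LinearMap.comp_apply, LinearMap.rTensor_comp_lTensor,
      LinearMap.lTensor_comp_rTensor]

end AuxMult

section AuxHopf

variable {k : Type*} [Field k]
variable {A : Type*} [NonUnitalRing A] [Module k A] [SMulCommClass k A A] [IsScalarTower k A A]

lemma aux_L7 (H : MHA k A) (x p y : A) :
    rTensor A (LinearMap.mulLeft k x) (H.T1 (p ⊗ₜ y))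
      = lTensor A (LinearMap.mulRight k y) (H.T2 (x ⊗ₜ p)) := by
  apply aux_incl_injective H.nondeg
  rw [← aux_tOne_mul_incl, ← aux_incl_mul_oneT, ← H.hT1, ← H.hT2, mul_assoc]

lemma aux_L8 (H : MHA k A) (a c d : A) :
    lTensor A (LinearMap.mulRight k d) (H.T4 (a ⊗ₜ c))
      = lTensor A (LinearMap.mulLeft k c) (H.T1 (a ⊗ₜ d)) := by
  apply aux_incl_injective H.nondeg
  rw [← aux_incl_mul_oneT, ← aux_oneT_mul_incl, ← H.hT1, ← H.hT4, mul_assoc]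

lemma aux_L11 (H : MHA k A) (x r s : A) :
    lTensor A (LinearMap.mulLeft k x) (H.T3 (r ⊗ₜ s))
      = rTensor A (LinearMap.mulRight k s) (H.T4 (r ⊗ₜ x)) := by
  apply aux_incl_injective H.nondeg
  rw [← aux_oneT_mul_incl, ← aux_incl_mul_tOne, ← H.hT3, ← H.hT4, mul_assoc]

lemma aux_L6 (H : MHA k A) (x y c : A) :
    rTensor A (LinearMap.mulLeft k x) (H.T4 (y ⊗ₜ c))
      = lTensor A (LinearMap.mulLeft k c) (H.T2 (x ⊗ₜ y)) := by
  apply aux_incl_injective H.nondeg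
  rw [← aux_tOne_mul_incl, ← aux_oneT_mul_incl, ← H.hT4, ← H.hT2, ← mul_assoc,
    ← mul_assoc, aux_tOne_comm_oneT]

lemma aux_L5 (H : MHA k A) (y c : A) :
    LinearMap.mul' k A (lTensor A H.S.toLinearMap (H.T4 (y ⊗ₜ c)))
      = H.counit y • H.S c := by
  rw [← sub_eq_zero]
  refine H.nondeg.2 _ fun x => ?_
  rw [mul_sub, sub_eq_zero]
  have s1 : ∀ u : A ⊗[k] A,
      x * LinearMap.mul' k A (lTensor A H.S.toLinearMap u)
        = LinearMap.mul' k A (lTensor A H.S.toLinearMap (rTensor A (LinearMap.mulLeft k x) u)) := by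
    intro u
    induction u with
    | zero => simp
    | tmul p q => simp [mul_assoc]
    | add u v hu hv => simp [mul_add, hu, hv]
  have s2 : ∀ u : A ⊗[k] A,
      lTensor A H.S.toLinearMap (lTensor A (LinearMap.mulLeft k c) u)
        = lTensor A (LinearMap.mulRight k (H.S c)) (lTensor A H.S.toLinearMap u) := by
    intro u
    induction u with
    | zero => simp
    | tmul p q => simp [H.S_antimul]
    | add u v hu hv => simp [hu, hv]
  have s3 : ∀ u : A ⊗[k] A,
      LinearMap.mul' k A (lTensor A (LinearMap.mulRight k (H.S c)) u)
        = LinearMap.mul' k A u * H.S c := by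
    intro u
    induction u with
    | zero => simp
    | tmul p q => simp [mul_assoc]
    | add u v hu hv => simp [add_mul, hu, hv]
  rw [s1, aux_L6 H x y c, s2, s3, H.hS2 x y, smul_mul_assoc, mul_smul_comm]

lemma aux_Ssymm_antimul (H : MHA k A) (m n : A) :
    H.S.symm (m * n) = H.S.symm n * H.S.symm m := by
  apply H.S.injective
  rw [H.S_antimul]
  simp

lemma aux_L10 (H : MHA k A) (a b : A) :
    LinearMap.mul' k A
        ((TensorProduct.comm k A A) (rTensor A H.S.symm.toLinearMap (H.T2 (a ⊗ₜ b))))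
      = H.counit b • H.S.symm a := by
  have key : ∀ u : A ⊗[k] A,
      LinearMap.mul' k A ((TensorProduct.comm k A A) (rTensor A H.S.symm.toLinearMap u))
        = H.S.symm (LinearMap.mul' k A (lTensor A H.S.toLinearMap u)) := by
    intro u
    induction u with
    | zero => simp
    | tmul p q => simp [aux_Ssymm_antimul H]
    | add u v hu hv => simp [hu, hv]
  rw [key, H.hS2 a b, map_smul]

lemma aux_apF_T4 (H : MHA k A) (a c : A) :
    apF k A H.counit (H.T4 (a ⊗ₜ c)) = c * a := by
  rw [← sub_eq_zero]
  refine H.nondeg.1 _ fun d => ?_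
  rw [sub_mul, sub_eq_zero]
  have e1 : ∀ u : A ⊗[k] A,
      apF k A H.counit u * d = apF k A H.counit (lTensor A (LinearMap.mulRight k d) u) := by
    intro u
    induction u with
    | zero => simp
    | tmul p q => simp [smul_mul_assoc]
    | add u v hu hv => simp [add_mul, hu, hv]
  have e2 : ∀ u : A ⊗[k] A,
      apF k A H.counit (lTensor A (LinearMap.mulLeft k c) u) = c * apF k A H.counit u := by
    intro u
    induction u with
    | zero => simp
    | tmul p q => simp [mul_smul_comm]
    | add u v hu hv => simp [mul_add, hu, hv]
  rw [e1, aux_L8 H a c d, e2, H.hcounit1 a d, mul_assoc]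

lemma aux_comm_tensor_maps {M N P Q : Type*} [AddCommGroup M] [Module k M]
    [AddCommGroup N] [Module k N] [AddCommGroup P] [Module k P] [AddCommGroup Q] [Module k Q]
    (f : M →ₗ[k] P) (g : N →ₗ[k] Q) (w : M ⊗[k] N) :
    rTensor Q f (lTensor M g w) = lTensor P g (rTensor N f w) := by
  rw [← LinearMap.comp_apply, ← LinearMap.comp_apply, LinearMap.rTensor_comp_lTensor,
    LinearMap.lTensor_comp_rTensor]

lemma aux_assoc_lTensor (f : A →ₗ[k] A) (w : (A ⊗[k] A) ⊗[k] A) :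
    (TensorProduct.assoc k A A A) (lTensor (A ⊗[k] A) f w)
      = lTensor A (lTensor A f) ((TensorProduct.assoc k A A A) w) := by
  induction w with
  | zero => simp
  | tmul u q =>
    induction u with
    | zero => simp
    | tmul p r => simp
    | add u v hu hv =>
      simp only [TensorProduct.add_tmul, map_add] at hu hv ⊢
      rw [hu, hv]
  | add u v hu hv => simp [hu, hv]

lemma aux_C4 (H : MHA k A) (x a c : A) :
    (TensorProduct.assoc k A A A)
        (rTensor A (H.T2.toLinearMap ∘ₗ TensorProduct.mk k A A x) (H.T4 (a ⊗ₜ c)))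
      = lTensor A (H.T4.toLinearMap ∘ₗ (TensorProduct.mk k A A).flip c) (H.T2 (x ⊗ₜ a)) := by
  have main : ∀ d : A,
      lTensor A (lTensor A (LinearMap.mulRight k d))
          ((TensorProduct.assoc k A A A)
            (rTensor A (H.T2.toLinearMap ∘ₗ TensorProduct.mk k A A x) (H.T4 (a ⊗ₜ c))))
        = lTensor A (lTensor A (LinearMap.mulRight k d))
            (lTensor A (H.T4.toLinearMap ∘ₗ (TensorProduct.mk k A A).flip c)
              (H.T2 (x ⊗ₜ a))) := by
    intro d
    rw [← aux_assoc_lTensor, ← aux_comm_tensor_maps, aux_L8 H a c d,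
      aux_comm_tensor_maps, aux_assoc_lTensor, H.coassoc x a d,
      ← LinearMap.lTensor_comp_apply, ← LinearMap.lTensor_comp_apply]
    congr 2
    refine LinearMap.ext fun y => ?_
    simp only [LinearMap.comp_apply, TensorProduct.mk_apply, LinearMap.flip_apply,
      LinearEquiv.coe_coe]
    exact (aux_L8 H y c d).symm
  rw [← sub_eq_zero]
  set D := (TensorProduct.assoc k A A A)
        (rTensor A (H.T2.toLinearMap ∘ₗ TensorProduct.mk k A A x) (H.T4 (a ⊗ₜ c)))
      - lTensor A (H.T4.toLinearMap ∘ₗ (TensorProduct.mk k A A).flip c) (H.T2 (x ⊗ₜ a))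
    with hD
  have h1 : ∀ d : A,
      lTensor (A ⊗[k] A) (LinearMap.mulRight k d) ((TensorProduct.assoc k A A A).symm D) = 0 := by
    intro d
    apply (TensorProduct.assoc k A A A).injective
    rw [aux_assoc_lTensor, LinearEquiv.apply_symm_apply, hD, map_sub, main d, sub_self, map_zero]
  have h2 := aux_stripR_snd H.nondeg _ h1
  have h3 := congrArg (TensorProduct.assoc k A A A) h2
  simpa using h3

end AuxHopf

section AuxN

variable {k : Type*} [Field k]
variable {A : Type*} [NonUnitalRing A] [Module k A] [SMulCommClass k A A] [IsScalarTower k A A]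

/-- `v ⊗ y ↦ v · (1 ⊗ y)` on `(A ⊗ A) ⊗ A`, as multiplication of legs 2 and 3. -/
noncomputable def auxM23 : (A ⊗[k] A) ⊗[k] A →ₗ[k] A ⊗[k] A :=
  lTensor A (LinearMap.mul' k A) ∘ₗ (TensorProduct.assoc k A A A).toLinearMap

lemma auxM23_apply (v : A ⊗[k] A) (y : A) :
    auxM23 (v ⊗ₜ y) = lTensor A (LinearMap.mulRight k y) v := by
  induction v with
  | zero => simp [auxM23]
  | tmul p q => simp [auxM23]
  | add u v hu hv =>
    simp only [TensorProduct.add_tmul, map_add] at hu hv ⊢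
    rw [hu, hv]

/-- multiplication of legs 1 and 3 on `(A ⊗ A) ⊗ A`. -/
noncomputable def auxM13 : (A ⊗[k] A) ⊗[k] A →ₗ[k] A ⊗[k] A :=
  rTensor A (LinearMap.mul' k A) ∘ₗ ((TensorProduct.assoc k A A A).symm.toLinearMap ∘ₗ
    (lTensor A (TensorProduct.comm k A A).toLinearMap ∘ₗ (TensorProduct.assoc k A A A).toLinearMap))

lemma auxM13_tmul (p q s : A) :
    auxM13 ((p ⊗ₜ q) ⊗ₜ[k] s) = (p * s) ⊗ₜ q := by
  simp [auxM13]

lemma auxM13_apply (v : A ⊗[k] A) (s : A) :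
    auxM13 (v ⊗ₜ s) = rTensor A (LinearMap.mulRight k s) v := by
  induction v with
  | zero => simp [auxM13]
  | tmul p q => simp [auxM13_tmul]
  | add u v hu hv =>
    simp only [TensorProduct.add_tmul, map_add] at hu hv ⊢
    rw [hu, hv]

lemma aux_smulRight_lTensor (f : A →ₗ[k] k) (z : A) (v : A ⊗[k] A) :
    lTensor A (f.smulRight z) v = apT k A A f v ⊗ₜ z := by
  induction v with
  | zero => simp
  | tmul m q => simp [TensorProduct.smul_tmul, TensorProduct.tmul_smul]
  | add u v hu hv => simp [hu, hv, TensorProduct.add_tmul]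

lemma aux_smulRight_rTensor (f : A →ₗ[k] k) (z : A) (v : A ⊗[k] A) :
    rTensor A (f.smulRight z) v = z ⊗ₜ apF k A f v := by
  induction v with
  | zero => simp
  | tmul p q => simp [TensorProduct.smul_tmul, TensorProduct.tmul_smul]
  | add u v hu hv => simp [hu, hv, TensorProduct.tmul_add]

lemma aux_N1 (H : MHA k A) (a c : A) :
    H.T1 (lTensor A H.S.toLinearMap (H.T4 (a ⊗ₜ c))) = a ⊗ₜ H.S c := by
  rw [← sub_eq_zero]
  refine aux_stripL_fst H.nondeg _ fun x => ?_
  rw [map_sub, sub_eq_zero]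
  have hPhi : ∀ u : A ⊗[k] A,
      rTensor A (LinearMap.mulLeft k x) (H.T1 u)
        = auxM23 (rTensor A (H.T2.toLinearMap ∘ₗ TensorProduct.mk k A A x) u) := by
    intro u
    induction u with
    | zero => simp
    | tmul p y =>
      rw [aux_L7 H x p y]
      simp [auxM23_apply]
    | add u v hu hv => simp [hu, hv]
  rw [hPhi, aux_comm_tensor_maps]
  show auxM23 (lTensor (A ⊗[k] A) H.S.toLinearMap
      (rTensor A (H.T2.toLinearMap ∘ₗ TensorProduct.mk k A A x) (H.T4 (a ⊗ₜ c))))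
    = rTensor A (LinearMap.mulLeft k x) (a ⊗ₜ H.S c)
  rw [auxM23, LinearMap.comp_apply, LinearEquiv.coe_coe, aux_assoc_lTensor, aux_C4 H x a c,
    ← LinearMap.lTensor_comp_apply, ← LinearMap.lTensor_comp_apply]
  have hinner : (LinearMap.mul' k A ∘ₗ lTensor A H.S.toLinearMap) ∘ₗ
      (H.T4.toLinearMap ∘ₗ (TensorProduct.mk k A A).flip c)
        = H.counit.smulRight (H.S c) := by
    refine LinearMap.ext fun y => ?_
    simp only [LinearMap.comp_apply, TensorProduct.mk_apply, LinearMap.flip_apply,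
      LinearEquiv.coe_coe, LinearMap.smulRight_apply]
    exact aux_L5 H y c
  rw [hinner, aux_smulRight_lTensor, H.hcounit2 x a]
  simp

lemma aux_N2 (H : MHA k A) (c a : A) :
    H.T3 ((TensorProduct.comm k A A) (rTensor A H.S.symm.toLinearMap (H.T2 (c ⊗ₜ a))))
      = H.S.symm c ⊗ₜ a := by
  rw [← sub_eq_zero]
  refine aux_stripL_snd H.nondeg _ fun x => ?_
  rw [map_sub, sub_eq_zero]
  have hPhi : ∀ u : A ⊗[k] A,
      lTensor A (LinearMap.mulLeft k x) (H.T3 u)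
        = auxM13 (rTensor A (H.T4.toLinearMap ∘ₗ (TensorProduct.mk k A A).flip x) u) := by
    intro u
    induction u with
    | zero => simp
    | tmul r s =>
      rw [aux_L11 H x r s]
      simp [auxM13_apply]
    | add u v hu hv => simp [hu, hv]
  have hcomm : ∀ v : A ⊗[k] A,
      (TensorProduct.comm k A A) (rTensor A H.S.symm.toLinearMap v)
        = lTensor A H.S.symm.toLinearMap ((TensorProduct.comm k A A) v) := by
    intro v
    induction v with
    | zero => simp
    | tmul p q => simp
    | add u v hu hv => simp [hu, hv]
  have hcomm2 : ∀ (h : A →ₗ[k] A ⊗[k] A) (v : A ⊗[k] A),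
      rTensor A h ((TensorProduct.comm k A A) v)
        = (TensorProduct.comm k A (A ⊗[k] A)) (lTensor A h v) := by
    intro h v
    induction v with
    | zero => simp
    | tmul p q => simp
    | add u v hu hv => simp [hu, hv]
  rw [hPhi, hcomm, aux_comm_tensor_maps, hcomm2]
  have hC4 : lTensor A (H.T4.toLinearMap ∘ₗ (TensorProduct.mk k A A).flip x) (H.T2 (c ⊗ₜ a))
      = (TensorProduct.assoc k A A A)
          (rTensor A (H.T2.toLinearMap ∘ₗ TensorProduct.mk k A A c) (H.T4 (a ⊗ₜ x))) :=
    (aux_C4 H c a x).symm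
  rw [hC4]
  have collapse : ∀ w : A ⊗[k] A,
      auxM13 (lTensor (A ⊗[k] A) H.S.symm.toLinearMap
          ((TensorProduct.comm k A (A ⊗[k] A))
            ((TensorProduct.assoc k A A A)
              (rTensor A (H.T2.toLinearMap ∘ₗ TensorProduct.mk k A A c) w))))
        = rTensor A ((LinearMap.mul' k A) ∘ₗ ((TensorProduct.comm k A A).toLinearMap ∘ₗ
            (rTensor A H.S.symm.toLinearMap ∘ₗ (H.T2.toLinearMap ∘ₗ TensorProduct.mk k A A c)))) w := by
    intro w
    induction w with
    | zero => simp
    | tmul p q =>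
      have inner : ∀ u : A ⊗[k] A,
          auxM13 (lTensor (A ⊗[k] A) H.S.symm.toLinearMap
              ((TensorProduct.comm k A (A ⊗[k] A)) ((TensorProduct.assoc k A A A) (u ⊗ₜ q))))
            = (LinearMap.mul' k A ((TensorProduct.comm k A A)
                (rTensor A H.S.symm.toLinearMap u))) ⊗ₜ q := by
        intro u
        induction u with
        | zero => simp
        | tmul α β => simp [auxM13_tmul]
        | add u v hu hv =>
          simp only [TensorProduct.add_tmul, map_add, hu, hv]
      simp only [rTensor_tmul, LinearMap.comp_apply, TensorProduct.mk_apply,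
        LinearEquiv.coe_coe]
      rw [inner (H.T2 (c ⊗ₜ p))]
    | add u v hu hv => simp [hu, hv]
  rw [collapse]
  have hinner : (LinearMap.mul' k A) ∘ₗ ((TensorProduct.comm k A A).toLinearMap ∘ₗ
      (rTensor A H.S.symm.toLinearMap ∘ₗ (H.T2.toLinearMap ∘ₗ TensorProduct.mk k A A c)))
        = H.counit.smulRight (H.S.symm c) := by
    refine LinearMap.ext fun y => ?_
    simp only [LinearMap.comp_apply, TensorProduct.mk_apply, LinearEquiv.coe_coe,
      LinearMap.smulRight_apply]
    exact aux_L10 H c y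
  rw [hinner, aux_smulRight_rTensor, aux_apF_T4 H a x]
  simp

end AuxN

section AuxPsum

variable {k : Type*} [Field k]

lemma aux_exists_psum {M N : Type*} [AddCommGroup M] [Module k M] [AddCommGroup N] [Module k N]
    (u : M ⊗[k] N) : ∃ l : List (M × N), psum k l = u := by
  induction u with
  | zero => exact ⟨[], rfl⟩
  | tmul m n => exact ⟨[(m, n)], by simp [psum]⟩
  | add u v hu hv =>
    obtain ⟨l1, h1⟩ := hu
    obtain ⟨l2, h2⟩ := hv
    exact ⟨l1 ++ l2, by simp [psum, ← h1, ← h2]⟩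

lemma aux_psum_map {M N P : Type*} [AddCommGroup M] [Module k M] [AddCommGroup N] [Module k N]
    [AddCommGroup P] [Module k P] (F : M ⊗[k] N →ₗ[k] P) (l : List (M × N)) :
    (l.map fun p => F (p.1 ⊗ₜ p.2)).sum = F (psum k l) := by
  induction l with
  | nil => simp [psum]
  | cons p l ih => simp [psum, List.map_cons, List.sum_cons, ih, map_add]

end AuxPsum

/-- **Lemma 4.11.**  Let `(R, ·, 𝔢)` be a symmetric partial `A`-module algebra over a
regular multiplier Hopf algebra `A`.  Then for all `a, b ∈ A`, `x, y ∈ R`: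
(i) `(a·x)(b·y) = a₍₁₎·(x(S(a₍₂₎)b·y))`, where `a₍₁₎ ⊗ S(a₍₂₎)b` is covered as
`(ι ⊗ S)((1 ⊗ S⁻¹(b))Δ(a)) = (ι ⊗ S)(T4(a ⊗ S⁻¹(b)))`;
(ii) `(a·x)(b·y) = b₍₂₎·((S⁻¹(b₍₁₎)a·x)y)`, where `b₍₂₎ ⊗ S⁻¹(b₍₁₎)a` is covered via
`(S(a) ⊗ 1)Δ(b) = T2(S(a) ⊗ b)`. -/
theorem sym_partial_action_mul_identities
    (H : MHA k A) (hR : NondegProd R)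
    (act : A →ₗ[k] R →ₗ[k] R) (e : A →ₗ[k] Multiplier k R)
    (h : IsSymPModAlg H R act e) :
    (∀ (a b : A) (x y : R) (l : List (A × A)), psum k l = H.T4 (a ⊗ₜ H.S.symm b) →
        act a x * act b y = (l.map fun p => act p.1 (x * act (H.S p.2) y)).sum)
    ∧ (∀ (a b : A) (x y : R) (l : List (A × A)), psum k l = H.T2 (H.S a ⊗ₜ b) →
        act a x * act b y
          = (l.map fun p => act p.2 (act (H.S.symm p.1) x * y)).sum) := by
  have hBgen : ∀ (x y : R) (p q : A),
      (LinearMap.mul' k R ∘ₗ TensorProduct.map (act.flip x) (act.flip y)) (p ⊗ₜ q)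
        = act p x * act q y := by
    intro x y p q
    simp
  constructor
  · intro a b x y l hl
    set B : A ⊗[k] A →ₗ[k] R :=
      LinearMap.mul' k R ∘ₗ TensorProduct.map (act.flip x) (act.flip y) with hBdef
    have hB : ∀ p q : A, B (p ⊗ₜ q) = act p x * act q y := hBgen x y
    have hcond1 : ∀ p q : A, act p (x * act q y) = B (H.T1 (p ⊗ₜ q)) := by
      intro p q
      obtain ⟨l', hl'⟩ := aux_exists_psum (H.T1 (p ⊗ₜ q))
      rw [h.cond1 p q x y l' hl', ← hl', ← aux_psum_map]
      simp only [hB]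
    set Θ : A ⊗[k] A →ₗ[k] R := B ∘ₗ H.T1.toLinearMap ∘ₗ lTensor A H.S.toLinearMap with hΘ
    have hterm : (fun p : A × A => act p.1 (x * act (H.S p.2) y))
        = fun p : A × A => Θ (p.1 ⊗ₜ p.2) := by
      funext p
      rw [hcond1]
      simp [hΘ]
    calc act a x * act b y
        = B (a ⊗ₜ b) := (hB a b).symm
      _ = B (a ⊗ₜ H.S (H.S.symm b)) := by rw [H.S.apply_symm_apply]
      _ = B (H.T1 (lTensor A H.S.toLinearMap (H.T4 (a ⊗ₜ H.S.symm b)))) := by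
            rw [aux_N1 H a (H.S.symm b)]
      _ = Θ (H.T4 (a ⊗ₜ H.S.symm b)) := by simp [hΘ]
      _ = Θ (psum k l) := by rw [hl]
      _ = (l.map fun p => Θ (p.1 ⊗ₜ p.2)).sum := (aux_psum_map Θ l).symm
      _ = (l.map fun p => act p.1 (x * act (H.S p.2) y)).sum := by rw [hterm]
  · intro a b x y l hl
    set B : A ⊗[k] A →ₗ[k] R :=
      LinearMap.mul' k R ∘ₗ TensorProduct.map (act.flip x) (act.flip y) with hBdef
    have hB : ∀ p q : A, B (p ⊗ₜ q) = act p x * act q y := hBgen x y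
    have hcond5 : ∀ p q : A, act p (act q x * y) = B (H.T3 (p ⊗ₜ q)) := by
      intro p q
      obtain ⟨l', hl'⟩ := aux_exists_psum (H.T3 (p ⊗ₜ q))
      rw [h.cond5 p q x y l' hl', ← hl', ← aux_psum_map]
      simp only [hB]
    set Θ₂ : A ⊗[k] A →ₗ[k] R := B ∘ₗ H.T3.toLinearMap ∘ₗ
      (TensorProduct.comm k A A).toLinearMap ∘ₗ rTensor A H.S.symm.toLinearMap with hΘ₂
    have hterm : (fun p : A × A => act p.2 (act (H.S.symm p.1) x * y))
        = fun p : A × A => Θ₂ (p.1 ⊗ₜ p.2) := by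
      funext p
      rw [hcond5]
      simp [hΘ₂]
    calc act a x * act b y
        = B (a ⊗ₜ b) := (hB a b).symm
      _ = B (H.S.symm (H.S a) ⊗ₜ b) := by rw [H.S.symm_apply_apply]
      _ = B (H.T3 ((TensorProduct.comm k A A)
            (rTensor A H.S.symm.toLinearMap (H.T2 (H.S a ⊗ₜ b))))) := by
            rw [aux_N2 H (H.S a) b]
      _ = Θ₂ (H.T2 (H.S a ⊗ₜ b)) := by simp [hΘ₂]
      _ = Θ₂ (psum k l) := by rw [hl]
      _ = (l.map fun p => Θ₂ (p.1 ⊗ₜ p.2)).sum := (aux_psum_map Θ₂ l).symm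
      _ = (l.map fun p => act p.2 (act (H.S.symm p.1) x * y)).sum := by rw [hterm]


end Statements
end
end
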